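/- arXiv:1608.08473 — 7 statements merged into one kernel-verified Lean document; each statement's English description precedes it below -/
import Mathlib

section
/- For every A > 0 there exist constants C > 0 and d₀ ∈ ℕ such that for all integers d ≥ d₀, all α ∈ [0, A], all x ∈ [0,1], and all s ≥ 0 with s·d ≤ 1, setting β = 1/d + α/d², one has |(e^{−β}(1 + β − s·x·β))^d − [1 − (1/2 + x·s·d)/d + (1/3 − α + x·s·d − α·x·s·d + (1/2)(1/2 + x·s·d)²)/d²]| ≤ C/d³. -/
theorem mylog (z : ℝ) (h : |z| < 1) :
    |Real.log (1 + z) - (z - z^2/2 + z^3/3)| ≤ |z|^4 / (1 - |z|) := by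
  have h' : |(-z)| < 1 := by rwa [abs_neg]
  have := Real.abs_log_sub_add_sum_range_le h' 3
  simp [Finset.sum_range_succ] at this
  calc |Real.log (1 + z) - (z - z^2/2 + z^3/3)|
      = |-z + z ^ 2 / (1 + 1) + (-z) ^ 3 / (2 + 1) + Real.log (1 + z)| := by
        congr 1; ring
    _ ≤ |z|^4/(1-|z|) := this

theorem myexp (v : ℝ) (h : |v| ≤ 1) : |Real.exp v - (1 + v + v^2/2)| ≤ 2/9 * |v|^3 := by
  have := Real.exp_bound h (n := 3) (by norm_num)
  simp [Finset.sum_range_succ, Nat.factorial] at this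
  calc |Real.exp v - (1 + v + v^2/2)| ≤ |v| ^ 3 * (4/(6*3)) := by convert this using 2
    _ = 2/9 * |v|^3 := by ring


theorem Rbnd (e t : ℝ) (he0 : 0 ≤ e) (he1 : e ≤ 1) (ht0 : 0 ≤ t) (ht1 : t ≤ 1) :
    |(-t - t^2/2 + e * t^2 - (1/3) * e^2 * t^3)| ≤ 3 ∧
    |(1 + 2*t - 3*e*t - e*t^2 + 3*e^2*t^2 - e^3*t^3)| ≤ 11 ∧
    |(-(1/2) + e + e*t - 3*e^2*t - (1/2)*e^2*t^2 + 3*e^3*t^2 - e^4*t^3)| ≤ 10 ∧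
    |((1/3)*e^2 - e^3*t + e^4*t^2 - (1/3)*e^5*t^3)| ≤ 3 := by
  have key : ∀ i k : ℕ, 0 ≤ e^i * t^k ∧ e^i * t^k ≤ 1 := fun i k =>
    ⟨by positivity, mul_le_one₀ (pow_le_one₀ he0 he1) (by positivity) (pow_le_one₀ ht0 ht1)⟩
  refine ⟨abs_le.mpr ⟨?_,?_⟩, abs_le.mpr ⟨?_,?_⟩, abs_le.mpr ⟨?_,?_⟩, abs_le.mpr ⟨?_,?_⟩⟩ <;>
    linarith [(key 0 1).1, (key 0 1).2, (key 0 2).1, (key 0 2).2, (key 1 1).1, (key 1 1).2,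
      (key 1 2).1, (key 1 2).2, (key 2 1).1, (key 2 1).2, (key 2 2).1, (key 2 2).2,
      (key 2 3).1, (key 2 3).2, (key 3 2).1, (key 3 2).2, (key 3 3).1, (key 3 3).2,
      (key 1 0).1, (key 1 0).2, (key 2 0).1, (key 2 0).2, (key 4 3).1, (key 4 3).2,
      (key 3 1).1, (key 3 1).2, (key 4 2).1, (key 4 2).2, (key 5 3).1, (key 5 3).2]

theorem sum_le (A : ℝ) (hA : 0 ≤ A) : 3 + A * 11 + A^2 * 10 + A^3 * 3 ≤ 11 * (1+A)^3 := by
  nlinarith [sq_nonneg A, pow_nonneg hA 3, mul_nonneg (mul_nonneg hA hA) hA]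

set_option maxHeartbeats 4000000 in

/-- For every `A > 0` there exist `C > 0` and `d₀ ∈ ℕ` such that for all
integers `d ≥ d₀`, all `α ∈ [0, A]`, all `x ∈ [0,1]`, and all `s ≥ 0` with `s·d ≤ 1`,
setting `β = 1/d + α/d²`, one has
`|(e^{−β}(1 + β − s·x·β))^d − [1 − (1/2 + x·s·d)/d
    + (1/3 − α + x·s·d − α·x·s·d + (1/2)(1/2 + x·s·d)²)/d²]| ≤ C/d³`. -/
theorem exp_one_expansion (A : ℝ) (hA : 0 < A) :
    ∃ C : ℝ, 0 < C ∧ ∃ d₀ : ℕ, ∀ d : ℕ, d₀ ≤ d → ∀ α ∈ Set.Icc (0 : ℝ) A,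
      ∀ x ∈ Set.Icc (0 : ℝ) 1, ∀ s : ℝ, 0 ≤ s → s * (d : ℝ) ≤ 1 →
        ∀ β : ℝ, β = 1 / (d : ℝ) + α / (d : ℝ) ^ 2 →
          |(Real.exp (-β) * (1 + β - s * x * β)) ^ d -
              (1 - (1 / 2 + x * s * (d : ℝ)) / (d : ℝ)
                + (1 / 3 - α + x * s * (d : ℝ) - α * (x * s * (d : ℝ))
                    + (1 / 2) * (1 / 2 + x * s * (d : ℝ)) ^ 2) / (d : ℝ) ^ 2)|
            ≤ C / (d : ℝ) ^ 3 := by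
  obtain ⟨B, hBdef⟩ : ∃ y : ℝ, y = 1 + A := ⟨_, rfl⟩
  have hB : 1 ≤ B := by simp [hBdef]; linarith
  have hB0 : 0 < B := by linarith
  refine ⟨300 * B^4, by positivity, ⌈43 * B^4⌉₊ + 1, ?_⟩
  intro d hd α ⟨hα0, hαA⟩ x ⟨hx0, hx1⟩ s hs hsd β hβ
  have hd1 : 1 ≤ d := le_trans (Nat.le_add_left 1 _) hd
  have hD0 : (0:ℝ) < (d:ℝ) := by exact_mod_cast Nat.lt_of_lt_of_le Nat.zero_lt_one hd1
  have hDbig : 43 * B^4 ≤ (d:ℝ) := by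
    calc 43 * B^4 ≤ (⌈43 * B^4⌉₊ : ℝ) := Nat.le_ceil _
      _ ≤ (d:ℝ) := by exact_mod_cast le_trans (Nat.le_add_right _ 1) hd
  obtain ⟨t, htdef⟩ : ∃ y : ℝ, y = x * s * (d:ℝ) := ⟨_, rfl⟩
  rw [← htdef]
  obtain ⟨e, hedef⟩ : ∃ y : ℝ, y = 1 / (d:ℝ) := ⟨_, rfl⟩
  have he0 : 0 < e := by rw [hedef]; positivity
  have he1 : e ≤ 1 := by rw [hedef]; rw [div_le_one hD0]; exact_mod_cast hd1
  have heB : e * (43 * B^4) ≤ 1 := by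
    rw [hedef]; rw [div_mul_eq_mul_div, div_le_one hD0]; linarith
  have hDe : (d:ℝ) = 1 / e := by rw [hedef, one_div_one_div]
  have ht0 : 0 ≤ t := by rw [htdef]; positivity
  have ht1 : t ≤ 1 := by
    have h1 : 0 ≤ s * (d:ℝ) := by positivity
    rw [htdef]; nlinarith
  have hβe : β = e + α * e^2 := by rw [hβ, hedef]; ring
  obtain ⟨z, hzdef⟩ : ∃ y : ℝ, y = e + (α - t) * e^2 - t * α * e^3 := ⟨_, rfl⟩
  have hsx : s * x = t * e := by rw [htdef, hedef]; field_simp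
  have hz_eq : 1 + β - s * x * β = 1 + z := by rw [hsx, hβe, hzdef]; ring
  -- |z| ≤ 2 B e ≤ 1/4
  have he2 : e^2 ≤ e := by nlinarith
  have he3 : e^3 ≤ e := by nlinarith
  have hz2B : |z| ≤ 2 * B * e := by
    have h1 : |α - t| ≤ A + 1 := abs_le.mpr ⟨by linarith, by linarith⟩
    have h2 : |t * α| ≤ A := by
      rw [abs_of_nonneg (by positivity)]; nlinarith
    calc |z| ≤ |e + (α - t) * e^2| + |t * α * e^3| := by rw [hzdef]; exact abs_sub _ _
      _ ≤ |e| + |α - t| * |e^2| + |t * α| * |e^3| := by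
          rw [abs_mul, abs_mul]; linarith [abs_add_le e ((α - t) * e^2), abs_mul (α - t) (e^2)]
      _ ≤ e + (A + 1) * e^2 + A * e^3 := by
          rw [abs_of_nonneg he0.le, abs_of_nonneg (by positivity : (0:ℝ) ≤ e^2),
            abs_of_nonneg (by positivity : (0:ℝ) ≤ e^3)]
          have := mul_le_mul_of_nonneg_right h1 (by positivity : (0:ℝ) ≤ e^2)
          have := mul_le_mul_of_nonneg_right h2 (by positivity : (0:ℝ) ≤ e^3)
          linarith
      _ ≤ 2 * B * e := by
          have ha : (A + 1) * e^2 ≤ (A + 1) * e := by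
            apply mul_le_mul_of_nonneg_left he2; linarith
          have hb : A * e^3 ≤ A * e := by
            apply mul_le_mul_of_nonneg_left he3; linarith
          rw [hBdef]; linarith
  have hB4a : B ≤ B^4 := by
    calc B = B^1 := (pow_one B).symm
      _ ≤ B^4 := pow_le_pow_right₀ hB (by norm_num)
  have hB24 : B^2 ≤ B^4 := pow_le_pow_right₀ hB (by norm_num)
  have hB34 : B^3 ≤ B^4 := pow_le_pow_right₀ hB (by norm_num)
  have hB40 : (0:ℝ) ≤ B^4 := by positivity
  have h8B : (8:ℝ) * B ≤ 43 * B^4 := by linarith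
  have h2Be : 2 * B * e ≤ 1/4 := by
    nlinarith [mul_le_mul_of_nonneg_right h8B he0.le]
  have hz14 : |z| ≤ 1/4 := le_trans hz2B h2Be
  have hg_pos : (0:ℝ) < 1 + z := by
    have := abs_le.mp hz14; linarith [this.1]
  -- the exponent w
  obtain ⟨w, hwdef⟩ : ∃ y : ℝ, y = (d:ℝ) * Real.log (1 + z) - (1 + α * e) := ⟨_, rfl⟩
  have hxpow : (Real.exp (-β) * (1 + z))^d = Real.exp w := by
    rw [mul_pow, ← Real.exp_nat_mul, ← Real.exp_log hg_pos, ← Real.exp_nat_mul, ← Real.exp_add]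
    congr 1
    rw [hwdef, hβe, hDe]
    field_simp
    ring
  -- log expansion
  obtain ⟨L3, hL3def⟩ : ∃ y : ℝ, y = z - z^2/2 + z^3/3 := ⟨_, rfl⟩
  have hlog : |Real.log (1 + z) - L3| ≤ 32 * B^4 * e^4 := by
    rw [hL3def]
    have h1 := mylog z (lt_of_le_of_lt hz14 (by norm_num))
    have h2 : |z|^4 / (1 - |z|) ≤ |z|^4 / (3/4) := by
      apply div_le_div_of_nonneg_left (by positivity) (by norm_num) (by linarith)
    have h3 : |z|^4 ≤ (2*B*e)^4 := by
      exact pow_le_pow_left₀ (abs_nonneg _) hz2B 4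
    have h4 : (2*B*e)^4 = 16 * B^4 * e^4 := by ring
    calc |Real.log (1 + z) - (z - z^2/2 + z^3/3)| ≤ |z|^4 / (1 - |z|) := h1
      _ ≤ |z|^4 / (3/4) := h2
      _ = (4/3) * |z|^4 := by ring
      _ ≤ (4/3) * (16 * B^4 * e^4) := by rw [h4] at h3; linarith
      _ ≤ 32 * B^4 * e^4 := by nlinarith [pow_pos he0 4]
  -- the second-order coefficient v and polynomial remainder R
  obtain ⟨v, hvdef⟩ : ∃ y : ℝ, y = -((1/2 + t) * e) + (1/3 - α + t - α * t) * e^2 := ⟨_, rfl⟩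
  obtain ⟨R0, hR0def⟩ : ∃ y : ℝ, y = -t - t^2/2 + e * t^2 - (1/3) * e^2 * t^3 := ⟨_, rfl⟩
  obtain ⟨R1, hR1def⟩ : ∃ y : ℝ, y = 1 + 2*t - 3*e*t - e*t^2 + 3*e^2*t^2 - e^3*t^3 := ⟨_, rfl⟩
  obtain ⟨R2, hR2def⟩ : ∃ y : ℝ, y = -(1/2) + e + e*t - 3*e^2*t - (1/2)*e^2*t^2 + 3*e^3*t^2 - e^4*t^3 := ⟨_, rfl⟩
  obtain ⟨R3, hR3def⟩ : ∃ y : ℝ, y = (1/3)*e^2 - e^3*t + e^4*t^2 - (1/3)*e^5*t^3 := ⟨_, rfl⟩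
  obtain ⟨R, hRdef⟩ : ∃ y : ℝ, y = R0 + α * R1 + α^2 * R2 + α^3 * R3 := ⟨_, rfl⟩
  have hDiff : (d:ℝ) * L3 - (1 + α * e) - v = e^3 * R := by
    rw [hL3def, hzdef, hvdef, hRdef, hR0def, hR1def, hR2def, hR3def, hDe]
    field_simp
    ring
  obtain ⟨hR0b', hR1b', hR2b', hR3b'⟩ := Rbnd e t he0.le he1 ht0 ht1
  have hR0b : |R0| ≤ 3 := by rw [hR0def]; exact hR0b'
  have hR1b : |R1| ≤ 11 := by rw [hR1def]; exact hR1b'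
  have hR2b : |R2| ≤ 10 := by rw [hR2def]; exact hR2b'
  have hR3b : |R3| ≤ 3 := by rw [hR3def]; exact hR3b'
  have hRb : |R| ≤ 11 * B^3 := by
    have h1 : |R| ≤ |R0| + |α| * |R1| + |α|^2 * |R2| + |α|^3 * |R3| := by
      rw [hRdef]
      calc |R0 + α * R1 + α^2 * R2 + α^3 * R3|
          ≤ |R0 + α * R1 + α^2 * R2| + |α^3 * R3| := abs_add_le _ _
        _ ≤ |R0 + α * R1| + |α^2 * R2| + |α^3 * R3| := by
            linarith [abs_add_le (R0 + α * R1) (α^2 * R2)]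
        _ ≤ |R0| + |α| * |R1| + |α|^2 * |R2| + |α|^3 * |R3| := by
            simp only [abs_mul, abs_pow]
            linarith [abs_add_le R0 (α * R1), abs_mul α R1]
    have hαa : |α| = α := abs_of_nonneg hα0
    rw [hαa] at h1
    have hA1 : α * |R1| ≤ A * 11 := mul_le_mul hαA hR1b (abs_nonneg _) hA.le
    have hA2 : α^2 * |R2| ≤ A^2 * 10 :=
      mul_le_mul (pow_le_pow_left₀ hα0 hαA 2) hR2b (abs_nonneg _) (by positivity)
    have hA3 : α^3 * |R3| ≤ A^3 * 3 :=
      mul_le_mul (pow_le_pow_left₀ hα0 hαA 3) hR3b (abs_nonneg _) (by positivity)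
    rw [hBdef]
    linarith [sum_le A hA.le]
  -- |w - v| bound
  have hwv : |w - v| ≤ 43 * B^4 * e^3 := by
    have heq : w - v = (d:ℝ) * (Real.log (1 + z) - L3) + ((d:ℝ) * L3 - (1 + α * e) - v) := by
      rw [hwdef]; ring
    have h1 : |(d:ℝ) * (Real.log (1 + z) - L3)| ≤ 32 * B^4 * e^3 := by
      rw [abs_mul, abs_of_nonneg hD0.le, hDe]
      calc (1/e) * |Real.log (1 + z) - L3| ≤ (1/e) * (32 * B^4 * e^4) := by
            apply mul_le_mul_of_nonneg_left hlog (by positivity)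
        _ = 32 * B^4 * e^3 := by field_simp
    have h2 : |(d:ℝ) * L3 - (1 + α * e) - v| ≤ 11 * B^3 * e^3 := by
      rw [hDiff, abs_mul, abs_of_nonneg (by positivity : (0:ℝ) ≤ e^3)]
      calc e^3 * |R| ≤ e^3 * (11 * B^3) := mul_le_mul_of_nonneg_left hRb (by positivity)
        _ = 11 * B^3 * e^3 := by ring
    have h3 : B^3 * e^3 ≤ B^4 * e^3 := mul_le_mul_of_nonneg_right hB34 (by positivity)
    calc |w - v| ≤ |(d:ℝ) * (Real.log (1 + z) - L3)| + |(d:ℝ) * L3 - (1 + α * e) - v| := by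
          rw [heq]; exact abs_add_le _ _
      _ ≤ 32 * B^4 * e^3 + 11 * B^3 * e^3 := by linarith
      _ ≤ 43 * B^4 * e^3 := by linarith
  have hwv1 : |w - v| ≤ 1 := by
    have h1 : 43 * B^4 * e^3 ≤ 43 * B^4 * e :=
      mul_le_mul_of_nonneg_left he3 (by positivity)
    calc |w - v| ≤ 43 * B^4 * e^3 := hwv
      _ ≤ 43 * B^4 * e := h1
      _ ≤ 1 := by linarith [heB]
  -- |v| bound
  have hvb : |v| ≤ 4 * B * e := by
    have h1 : |(1/2 + t) * e| ≤ (3/2) * e := by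
      rw [abs_mul, abs_of_nonneg he0.le, abs_of_nonneg (by linarith : (0:ℝ) ≤ 1/2 + t)]
      exact mul_le_mul_of_nonneg_right (by linarith) he0.le
    have hαt0 : 0 ≤ α * t := mul_nonneg hα0 ht0
    have hαt1 : α * t ≤ A := by
      calc α * t ≤ A * 1 := mul_le_mul hαA ht1 ht0 hA.le
        _ = A := mul_one A
    have hcb : |1/3 - α + t - α * t| ≤ 2 * B := by
      rw [hBdef]; apply abs_le.mpr; constructor <;> linarith
    have h2 : |(1/3 - α + t - α * t) * e^2| ≤ 2 * B * e^2 := by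
      rw [abs_mul, abs_of_nonneg (by positivity : (0:ℝ) ≤ e^2)]
      exact mul_le_mul_of_nonneg_right hcb (by positivity)
    have h3 : 2 * B * e^2 ≤ 2 * B * e := mul_le_mul_of_nonneg_left he2 (by positivity)
    have h4 : (3/2) * e ≤ 2 * B * e := mul_le_mul_of_nonneg_right (by linarith) he0.le
    calc |v| ≤ |(1/2 + t) * e| + |(1/3 - α + t - α * t) * e^2| := by
          rw [hvdef]; rw [neg_add_eq_sub, abs_sub_comm]; exact abs_sub _ _
      _ ≤ (3/2) * e + 2 * B * e^2 := by linarith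
      _ ≤ 4 * B * e := by linarith
  have hv12 : |v| ≤ 1/2 := by
    calc |v| ≤ 4 * B * e := hvb
      _ = 2 * (2 * B * e) := by ring
      _ ≤ 1/2 := by linarith
  -- E2: |exp w - exp v|
  have hexpv : Real.exp v ≤ 3 := by
    have hv1 : v ≤ 1 := by linarith [abs_le.mp hv12 |>.2]
    calc Real.exp v ≤ Real.exp 1 := Real.exp_le_exp.mpr hv1
      _ ≤ 3 := by linarith [Real.exp_one_lt_d9]
  have hE2 : |Real.exp w - Real.exp v| ≤ 6 * (43 * B^4 * e^3) := by
    have heq : Real.exp w - Real.exp v = Real.exp v * (Real.exp (w - v) - 1) := by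
      rw [mul_sub, mul_one, ← Real.exp_add]; ring_nf
    rw [heq, abs_mul, abs_of_nonneg (Real.exp_nonneg v)]
    have h1 : |Real.exp (w - v) - 1| ≤ 2 * |w - v| := Real.abs_exp_sub_one_le hwv1
    calc Real.exp v * |Real.exp (w - v) - 1| ≤ 3 * (2 * |w - v|) :=
          mul_le_mul hexpv h1 (abs_nonneg _) (by norm_num)
      _ = 6 * |w - v| := by ring
      _ ≤ 6 * (43 * B^4 * e^3) := by linarith
  -- E3
  have hE3 : |Real.exp v - (1 + v + v^2/2)| ≤ 2/9 * (64 * B^3 * e^3) := by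
    have h1 := myexp v (by linarith)
    have h2 : |v|^3 ≤ (4*B*e)^3 := pow_le_pow_left₀ (abs_nonneg _) hvb 3
    have h3 : (4*B*e)^3 = 64 * B^3 * e^3 := by ring
    rw [h3] at h2
    calc |Real.exp v - (1 + v + v^2/2)| ≤ 2/9 * |v|^3 := h1
      _ ≤ 2/9 * (64 * B^3 * e^3) := by linarith
  -- E4: quadratic of v vs target polynomial
  obtain ⟨Pl, hPldef⟩ : ∃ y : ℝ,
      y = 1 - (1/2 + t) * e + (1/3 - α + t - α*t + (1/2)*(1/2 + t)^2) * e^2 := ⟨_, rfl⟩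
  have hE4 : |(1 + v + v^2/2) - Pl| ≤ 5 * B^2 * e^3 := by
    have heq : (1 + v + v^2/2) - Pl =
        (-((1/2 + t) * e)) * ((1/3 - α + t - α * t) * e^2)
          + ((1/3 - α + t - α * t) * e^2)^2 / 2 := by
      rw [hvdef, hPldef]; ring
    rw [heq]
    have hαt0 : 0 ≤ α * t := mul_nonneg hα0 ht0
    have hαt1 : α * t ≤ A := by
      calc α * t ≤ A * 1 := mul_le_mul hαA ht1 ht0 hA.le
        _ = A := mul_one A
    have hcb : |1/3 - α + t - α * t| ≤ 2 * B := by
      rw [hBdef]; apply abs_le.mpr; constructor <;> linarith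
    have q2 : |1/3 - α + t - α * t| * e^2 ≤ 2 * B * e^2 :=
      mul_le_mul_of_nonneg_right hcb (by positivity)
    have h1 : |(-((1/2 + t) * e)) * ((1/3 - α + t - α * t) * e^2)| ≤ 3 * B * e^3 := by
      rw [abs_mul, abs_neg, abs_mul, abs_mul, abs_of_nonneg he0.le,
        abs_of_nonneg (by positivity : (0:ℝ) ≤ e^2),
        abs_of_nonneg (by linarith : (0:ℝ) ≤ 1/2 + t)]
      have q1 : (1/2 + t) * e ≤ (3/2) * e := mul_le_mul_of_nonneg_right (by linarith) he0.le
      calc (1/2 + t) * e * (|1/3 - α + t - α * t| * e^2)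
          ≤ (3/2) * e * (2 * B * e^2) :=
            mul_le_mul q1 q2 (by positivity) (by positivity)
        _ = 3 * B * e^3 := by ring
    have h2 : |((1/3 - α + t - α * t) * e^2)^2 / 2| ≤ 2 * B^2 * e^3 := by
      rw [abs_div, abs_pow, abs_mul, abs_of_nonneg (by positivity : (0:ℝ) ≤ e^2), abs_two]
      have h5 : (|1/3 - α + t - α * t| * e^2)^2 ≤ (2*B*e^2)^2 :=
        pow_le_pow_left₀ (by positivity) q2 2
      have he4 : e^4 ≤ e^3 := pow_le_pow_of_le_one he0.le he1 (by norm_num)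
      have h6 : 2 * B^2 * e^4 ≤ 2 * B^2 * e^3 := mul_le_mul_of_nonneg_left he4 (by positivity)
      calc (|1/3 - α + t - α * t| * e^2)^2 / 2 ≤ (2*B*e^2)^2 / 2 := by linarith
        _ = 2 * B^2 * e^4 := by ring
        _ ≤ 2 * B^2 * e^3 := h6
    have hBB2 : B ≤ B^2 := by
      calc B = B * 1 := (mul_one B).symm
        _ ≤ B * B := mul_le_mul_of_nonneg_left hB hB0.le
        _ = B^2 := (sq B).symm
    have h7 : B * e^3 ≤ B^2 * e^3 := mul_le_mul_of_nonneg_right hBB2 (by positivity)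
    calc |(-((1/2 + t) * e)) * ((1/3 - α + t - α * t) * e^2)
          + ((1/3 - α + t - α * t) * e^2)^2 / 2|
        ≤ |(-((1/2 + t) * e)) * ((1/3 - α + t - α * t) * e^2)|
          + |((1/3 - α + t - α * t) * e^2)^2 / 2| := abs_add_le _ _
      _ ≤ 3 * B * e^3 + 2 * B^2 * e^3 := by linarith
      _ ≤ 5 * B^2 * e^3 := by linarith
  -- assemble
  have hgoal_eq : (1 - (1 / 2 + t) / (d:ℝ)
      + (1 / 3 - α + t - α * t + (1 / 2) * (1 / 2 + t) ^ 2) / (d:ℝ) ^ 2) = Pl := by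
    rw [hPldef, hDe]; field_simp
  have hCeq : 300 * B^4 / (d:ℝ)^3 = 300 * B^4 * e^3 := by
    rw [hedef]; ring
  have hb3 : B^3 * e^3 ≤ B^4 * e^3 := mul_le_mul_of_nonneg_right hB34 (by positivity)
  have hb2 : B^2 * e^3 ≤ B^4 * e^3 := mul_le_mul_of_nonneg_right hB24 (by positivity)
  rw [hz_eq, hxpow, hgoal_eq, hCeq]
  calc |Real.exp w - Pl|
      ≤ |Real.exp w - Real.exp v| + |Real.exp v - (1 + v + v^2/2)| + |(1 + v + v^2/2) - Pl| := by
        linarith [abs_sub_le (Real.exp w) (Real.exp v) Pl,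
          abs_sub_le (Real.exp v) (1 + v + v^2/2) Pl]
    _ ≤ 6 * (43 * B^4 * e^3) + 2/9 * (64 * B^3 * e^3) + 5 * B^2 * e^3 := by linarith
    _ ≤ 300 * B^4 * e^3 := by
        have hpos : (0:ℝ) ≤ B^4 * e^3 := by positivity
        linarith
end

section
/- For every A > 0 there exist constants C > 0 and d₀ ∈ ℕ such that for all integers d ≥ d₀ and all α ∈ [0, A], setting β = 1/d + α/d², one has |(e^{−β}(1+β))^d − (1 − 1/(2d))| ≤ C/d². -/
set_option maxHeartbeats 800000

lemma log_taylor_aux (β : ℝ) (h0 : 0 ≤ β) (h1 : β ≤ 1/2) :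
    |Real.log (1 + β) - (β - β ^ 2 / 2)| ≤ 2 * β ^ 3 := by
  have hx : |(-β : ℝ)| < 1 := by rw [abs_neg, abs_of_nonneg h0]; linarith
  have h := Real.abs_log_sub_add_sum_range_le hx 2
  rw [abs_neg, abs_of_nonneg h0] at h
  simp only [Finset.sum_range_succ, Finset.sum_range_zero] at h
  norm_num at h
  have h2 : |Real.log (1 + β) - (β - β ^ 2 / 2)| ≤ β ^ 3 / (1 - β) := by
    have e : -β + β ^ 2 / 2 + Real.log (1 + β) = Real.log (1 + β) - (β - β ^ 2 / 2) := by ring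
    rw [e] at h; exact h
  have hd : (1:ℝ)/2 ≤ 1 - β := by linarith
  have h3 : β ^ 3 / (1 - β) ≤ 2 * β ^ 3 := by
    rw [div_le_iff₀ (by linarith)]
    nlinarith [pow_nonneg h0 3]
  linarith

/-- For every `A > 0` there exist `C > 0` and `d₀ ∈ ℕ` such that for all
integers `d ≥ d₀` and all `α ∈ [0, A]`, setting `β = 1/d + α/d²`, one has
`|(e^{−β}(1+β))^d − (1 − 1/(2d))| ≤ C/d²`. -/
theorem prob_A1_expansion (A : ℝ) (hA : 0 < A) :
    ∃ C : ℝ, 0 < C ∧ ∃ d₀ : ℕ, ∀ d : ℕ, d₀ ≤ d → ∀ α ∈ Set.Icc (0 : ℝ) A,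
      ∀ β : ℝ, β = 1 / (d : ℝ) + α / (d : ℝ) ^ 2 →
        |(Real.exp (-β) * (1 + β)) ^ d - (1 - 1 / (2 * (d : ℝ)))| ≤ C / (d : ℝ) ^ 2 := by
  refine ⟨2 * (16 + A + A ^ 2 / 2) + 1, by positivity, ⌈A + A ^ 2 + 20⌉₊, ?_⟩
  intro d hd α hα β hβ
  obtain ⟨hα0, hαA⟩ := hα
  have hdR : (A + A ^ 2 + 20 : ℝ) ≤ d :=
    le_trans (Nat.le_ceil _) (Nat.cast_le.mpr hd)
  have hd20 : (20 : ℝ) ≤ d := by nlinarith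
  have hd0 : (0 : ℝ) < d := by linarith
  have hAd : A ≤ d := by nlinarith
  have hβ0 : 0 ≤ β := by rw [hβ]; positivity
  have hα2 : α / (d : ℝ) ^ 2 ≤ 1 / d := by
    rw [div_le_div_iff₀ (by positivity) hd0]; nlinarith
  have hβ2d : β ≤ 2 / d := by
    have : (2 : ℝ) / d = 1 / d + 1 / d := by ring
    rw [hβ, this]; linarith
  have hβhalf : β ≤ 1 / 2 := by
    refine le_trans hβ2d ?_
    rw [div_le_div_iff₀ hd0 (by norm_num)]; linarith
  have hlog := log_taylor_aux β hβ0 hβhalf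
  have h1β : (0 : ℝ) < 1 + β := by linarith
  have hpow : (Real.exp (-β) * (1 + β)) ^ d
      = Real.exp (d * (Real.log (1 + β) - β)) := by
    have hexp : Real.exp (-β) * (1 + β) = Real.exp (Real.log (1 + β) - β) := by
      rw [Real.exp_sub, Real.exp_log h1β, Real.exp_neg]; ring
    rw [hexp, ← Real.exp_nat_mul]
  set t : ℝ := 1 / (2 * d) with ht
  set δ : ℝ := d * (Real.log (1 + β) - β) + t with hδ
  have hquad : d * β ^ 2 / 2 - t = α / d ^ 2 + α ^ 2 / (2 * d ^ 3) := by
    rw [hβ, ht]; field_simp; ring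
  have hK : (16 + A + A ^ 2 / 2 : ℝ) ≤ d := by nlinarith
  have hδbound : |δ| ≤ (16 + A + A ^ 2 / 2) / d ^ 2 := by
    have h1 : |d * (Real.log (1 + β) - (β - β ^ 2 / 2))| ≤ d * (2 * β ^ 3) := by
      rw [abs_mul, abs_of_pos hd0]
      exact mul_le_mul_of_nonneg_left hlog hd0.le
    have hβ3 : β ^ 3 ≤ (2 / d) ^ 3 := pow_le_pow_left₀ hβ0 hβ2d 3
    have h2 : d * (2 * β ^ 3) ≤ 16 / d ^ 2 := by
      have : d * (2 * β ^ 3) ≤ d * (2 * (2 / d) ^ 3) := by nlinarith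
      calc d * (2 * β ^ 3) ≤ d * (2 * (2 / d) ^ 3) := this
        _ = 16 / d ^ 2 := by field_simp; ring
    have hd23 : (d : ℝ) ^ 2 ≤ d ^ 3 := by nlinarith
    have h3a : α / (d : ℝ) ^ 2 ≤ A / d ^ 2 := by gcongr
    have h3b : α ^ 2 / (2 * (d : ℝ) ^ 3) ≤ A ^ 2 / (2 * d ^ 2) := by
      gcongr <;> nlinarith
    have h3 : α / d ^ 2 + α ^ 2 / (2 * d ^ 3) ≤ (A + A ^ 2 / 2) / d ^ 2 := by
      have e : (A + A ^ 2 / 2) / (d : ℝ) ^ 2 = A / d ^ 2 + A ^ 2 / (2 * d ^ 2) := by ring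
      rw [e]; linarith
    have hδeq : δ = d * (Real.log (1 + β) - (β - β ^ 2 / 2))
        - (α / d ^ 2 + α ^ 2 / (2 * d ^ 3)) := by
      rw [hδ, ← hquad]; ring
    have hq0 : 0 ≤ α / d ^ 2 + α ^ 2 / (2 * d ^ 3) := by positivity
    rw [hδeq]
    calc |d * (Real.log (1 + β) - (β - β ^ 2 / 2)) - (α / d ^ 2 + α ^ 2 / (2 * d ^ 3))|
        ≤ |d * (Real.log (1 + β) - (β - β ^ 2 / 2))| + |α / d ^ 2 + α ^ 2 / (2 * d ^ 3)| :=
          abs_sub _ _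
      _ ≤ d * (2 * β ^ 3) + (α / d ^ 2 + α ^ 2 / (2 * d ^ 3)) := by
          rw [abs_of_nonneg hq0]; linarith
      _ ≤ 16 / d ^ 2 + (A + A ^ 2 / 2) / d ^ 2 := by linarith
      _ = (16 + A + A ^ 2 / 2) / d ^ 2 := by ring
  have hδ1 : |δ| ≤ 1 := by
    refine le_trans hδbound ?_
    rw [div_le_one (by positivity)]; nlinarith
  have ht0 : 0 ≤ t := by positivity
  have ht1 : t ≤ 1 := by
    rw [ht, div_le_one (by linarith)]; linarith
  have hsplit : Real.exp (d * (Real.log (1 + β) - β))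
      = Real.exp (-t) * Real.exp δ := by
    rw [← Real.exp_add]; congr 1; rw [hδ]; ring
  rw [hpow, hsplit]
  have hexpδ : |Real.exp δ - 1| ≤ 2 * |δ| := Real.abs_exp_sub_one_le hδ1
  have hexpt : |Real.exp (-t) - 1 - (-t)| ≤ (-t) ^ 2 :=
    Real.abs_exp_sub_one_sub_id_le (by rw [abs_neg, abs_of_nonneg ht0]; exact ht1)
  have het : Real.exp (-t) ≤ 1 := by
    rw [Real.exp_le_one_iff]; linarith
  have het0 : 0 < Real.exp (-t) := Real.exp_pos _
  have hsum : Real.exp (-t) * Real.exp δ - (1 - t)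
      = Real.exp (-t) * (Real.exp δ - 1) + (Real.exp (-t) - 1 - (-t)) := by ring
  have htd : (1 - 1 / (2 * (d : ℝ))) = 1 - t := by rw [ht]
  rw [htd, hsum]
  have habs : |Real.exp (-t) * (Real.exp δ - 1) + (Real.exp (-t) - 1 - (-t))|
      ≤ |Real.exp (-t) * (Real.exp δ - 1)| + |Real.exp (-t) - 1 - (-t)| := abs_add_le _ _
  have h1 : |Real.exp (-t) * (Real.exp δ - 1)| ≤ 2 * |δ| := by
    rw [abs_mul, abs_of_pos het0]
    calc Real.exp (-t) * |Real.exp δ - 1| ≤ 1 * |Real.exp δ - 1| := by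
          apply mul_le_mul_of_nonneg_right het (abs_nonneg _)
      _ = |Real.exp δ - 1| := one_mul _
      _ ≤ 2 * |δ| := hexpδ
  have ht2 : (-t) ^ 2 ≤ 1 / d ^ 2 := by
    rw [ht]
    have e : (-(1 / (2 * (d : ℝ)))) ^ 2 = 1 / (4 * d ^ 2) := by ring
    rw [e, div_le_div_iff₀ (by positivity) (by positivity)]
    nlinarith
  calc |Real.exp (-t) * (Real.exp δ - 1) + (Real.exp (-t) - 1 - (-t))|
      ≤ 2 * |δ| + (-t) ^ 2 := by linarith [habs, h1, hexpt]
    _ ≤ 2 * ((16 + A + A ^ 2 / 2) / d ^ 2) + 1 / d ^ 2 := by linarith [hδbound, ht2]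
    _ = (2 * (16 + A + A ^ 2 / 2) + 1) / d ^ 2 := by ring
end

section
/- For every A > 0 there exist constants C > 0 and d₀ ∈ ℕ such that for all integers d ≥ d₀ and all α ∈ [0, A], setting β = 1/d + α/d², one has |d·p_{≥2}(β) − d·p₂(β)·(1 − p_{≥2}(β))^{d−1} − (5/12)/d²| ≤ C/d³. -/
set_option maxHeartbeats 2000000

/-- The Poisson(β) probability mass function `p_j(β) = e^{−β} β^j / j!`. -/
noncomputable def poissonProb (β : ℝ) (j : ℕ) : ℝ :=
  Real.exp (-β) * β ^ j / (Nat.factorial j)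

/-- The Poisson(β) tail probability `p_{≥k}(β) = Σ_{j≥k} e^{−β} β^j / j!`. -/
noncomputable def poissonTail (β : ℝ) (k : ℕ) : ℝ :=
  ∑' j : ℕ, if k ≤ j then poissonProb β j else 0

lemma exp_neg_quartic {x : ℝ} (h0 : 0 ≤ x) (h1 : x ≤ 1) :
    |Real.exp (-x) - (1 - x + x^2/2 - x^3/6)| ≤ x^4 * (5/96) := by
  have hx : |(-x)| ≤ 1 := by rwa [abs_neg, abs_of_nonneg h0]
  have h := Real.exp_bound hx (n := 4) (by norm_num)
  have hs : ∑ m ∈ Finset.range 4, (-x)^m / (Nat.factorial m) = 1 - x + x^2/2 - x^3/6 := by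
    simp [Finset.sum_range_succ, Nat.factorial]
    ring
  rw [hs, abs_neg, abs_of_nonneg h0] at h
  norm_num at h ⊢
  convert h using 2

lemma exp_neg_quad {x : ℝ} (h0 : 0 ≤ x) (h1 : x ≤ 1) :
    |Real.exp (-x) - (1 - x)| ≤ x^2 * (3/4) := by
  have hx : |(-x)| ≤ 1 := by rwa [abs_neg, abs_of_nonneg h0]
  have h := Real.exp_bound hx (n := 2) (by norm_num)
  have hs : ∑ m ∈ Finset.range 2, (-x)^m / (Nat.factorial m) = 1 - x := by
    simp [Finset.sum_range_succ, Nat.factorial]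
    ring
  rw [hs, abs_neg, abs_of_nonneg h0] at h
  norm_num [Nat.factorial] at h ⊢
  linarith


lemma tsum_pow_div_fact (β : ℝ) : ∑' j : ℕ, β ^ j / (Nat.factorial j : ℝ) = Real.exp β := by
  have := congrFun Real.exp_eq_exp_ℝ β
  rw [NormedSpace.exp_eq_tsum_div] at this
  exact this.symm

lemma poissonTail_two (β : ℝ) : poissonTail β 2 = 1 - Real.exp (-β) * (1 + β) := by
  have hs : Summable (fun j => β ^ j / (Nat.factorial j : ℝ)) := Real.summable_pow_div_factorial β
  have hs2 : Summable (fun j => poissonProb β j) := by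
    simpa [poissonProb, mul_div_assoc] using hs.mul_left (Real.exp (-β))
  have htot : ∑' j, poissonProb β j = 1 := by
    simp only [poissonProb, mul_div_assoc]
    rw [tsum_mul_left, tsum_pow_div_fact, ← Real.exp_add]
    simp
  have hpt : (fun j : ℕ => if 2 ≤ j then poissonProb β j else 0)
      = fun j => poissonProb β j - (if j = 0 then poissonProb β 0 else 0)
          - (if j = 1 then poissonProb β 1 else 0) := by
    funext j
    match j with
    | 0 => simp
    | 1 => simp
    | (n+2) => simp [Nat.le_add_left]
  rw [poissonTail, hpt]
  rw [Summable.tsum_sub (hs2.sub ((hasSum_ite_eq (0:ℕ) _).summable)) ((hasSum_ite_eq (1:ℕ) _).summable),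
    Summable.tsum_sub hs2 ((hasSum_ite_eq (0:ℕ) _).summable), htot, tsum_ite_eq, tsum_ite_eq]
  simp [poissonProb]
  ring

lemma poissonProb_two (β : ℝ) : poissonProb β 2 = Real.exp (-β) * β^2 / 2 := by
  norm_num [poissonProb]

lemma key_est (A : ℝ) (hA : 0 < A) (d : ℕ) (hd8 : 8 ≤ d) (hdA : A ≤ (d:ℝ)) (β : ℝ)
    (h1 : 1 ≤ (d:ℝ) * β) (h2 : (d:ℝ) * β ≤ 1 + A / (d:ℝ)) :
    |(d:ℝ) * (1 - Real.exp (-β) * (1+β))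
      - (d:ℝ) * (Real.exp (-β) * β^2 / 2) * (Real.exp (-β) * (1+β)) ^ (d-1)
      - (5/12) / (d:ℝ)^2| ≤ (100 + 5*A) / (d:ℝ)^3 := by
  obtain ⟨E, hEdef⟩ : ∃ E : ℝ, E = Real.exp (-β) := ⟨_, rfl⟩
  obtain ⟨n, hndef⟩ : ∃ n : ℕ, n = d - 1 := ⟨_, rfl⟩
  obtain ⟨D, hDdef⟩ : ∃ D : ℝ, D = (d:ℝ) := ⟨_, rfl⟩
  rw [← hEdef, ← hndef, ← hDdef]
  obtain ⟨T, hTdef⟩ : ∃ T : ℝ, T = 1 - E * (1+β) := ⟨_, rfl⟩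
  obtain ⟨U, hUdef⟩ : ∃ U : ℝ, U = (E * (1+β))^n := ⟨_, rfl⟩
  obtain ⟨N, hNdef⟩ : ∃ N : ℝ, N = ((n:ℕ):ℝ) := ⟨_, rfl⟩
  rw [← hTdef, ← hUdef]
  have hUT : U = (1 - T)^n := by rw [hUdef]; congr 1; rw [hTdef]; ring
  have hD8 : (8:ℝ) ≤ D := by rw [hDdef]; exact_mod_cast hd8
  have hD0 : (0:ℝ) < D := by linarith
  rw [← hDdef] at h1 h2 hdA
  have hβ0 : 0 < β := by
    by_contra h
    push_neg at h
    have : D * β ≤ 0 := mul_nonpos_of_nonneg_of_nonpos hD0.le h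
    linarith
  have haD : A / D ≤ 1 := by rw [div_le_one hD0]; linarith
  have hs2 : D * β ≤ 2 := by linarith
  have hβ14 : β ≤ 1/4 := by
    linarith [mul_nonneg (by linarith : (0:ℝ) ≤ D - 8) hβ0.le]
  have hβ1 : β ≤ 1 := by linarith
  have hs0 : (0:ℝ) ≤ D * β := by positivity
  have h2s : (0:ℝ) ≤ 2 - D * β := by linarith
  have hs3 : (D*β)^3 ≤ 8 := by
    linarith [mul_nonneg (mul_nonneg h2s hs0) hs0, mul_nonneg h2s hs0, h2s]
  have hs4 : (D*β)^4 ≤ 16 := by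
    linarith [mul_nonneg (mul_nonneg (mul_nonneg h2s hs0) hs0) hs0,
      mul_nonneg (mul_nonneg h2s hs0) hs0, mul_nonneg h2s hs0, h2s]
  have hs5 : (D*β)^5 ≤ 32 := by
    linarith [mul_nonneg (mul_nonneg (mul_nonneg (mul_nonneg h2s hs0) hs0) hs0) hs0,
      mul_nonneg (mul_nonneg (mul_nonneg h2s hs0) hs0) hs0,
      mul_nonneg (mul_nonneg h2s hs0) hs0, mul_nonneg h2s hs0, h2s]
  have hβsq : β^2 ≤ β := by linarith [mul_nonneg hβ0.le (by linarith : (0:ℝ) ≤ 1 - β)]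
  have hβ32 : β^3 ≤ β^2/4 := by linarith [mul_nonneg (sq_nonneg β) (by linarith : (0:ℝ) ≤ 1/4 - β)]
  have hβ43 : β^4 ≤ β^3 := by linarith [mul_nonneg (pow_nonneg hβ0.le 3) (by linarith : (0:ℝ) ≤ 1 - β)]
  have hβ434 : β^4 ≤ β^3/4 := by linarith [mul_nonneg (pow_nonneg hβ0.le 3) (by linarith : (0:ℝ) ≤ 1/4 - β)]
  have hβ54 : β^5 ≤ β^4 := by linarith [mul_nonneg (pow_nonneg hβ0.le 4) (by linarith : (0:ℝ) ≤ 1 - β)]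
  have hq := abs_le.mp (exp_neg_quartic hβ0.le hβ1)
  have hq2 := abs_le.mp (exp_neg_quad hβ0.le hβ1)
  rw [← hEdef] at hq hq2
  have hElb : 1 - β + β^2/2 - β^3/6 - β^4*(5/96) ≤ E := by linarith [hq.1]
  have hEub : E ≤ 1 - β + β^2/2 - β^3/6 + β^4*(5/96) := by linarith [hq.2]
  have h1β0 : (0:ℝ) ≤ 1 + β := by linarith
  have hr1u : T - (β^2/2 - β^3/3) ≤ β^4 := by
    rw [hTdef]
    linarith [mul_le_mul_of_nonneg_left hElb h1β0, hβ54, pow_nonneg hβ0.le 4]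
  have hr1l : -β^4 ≤ T - (β^2/2 - β^3/3) := by
    rw [hTdef]
    linarith [mul_le_mul_of_nonneg_left hEub h1β0, hβ54, pow_nonneg hβ0.le 4]
  have hE0 : 0 < E := hEdef ▸ Real.exp_pos _
  have hEmul : E * Real.exp β = 1 := by rw [hEdef, ← Real.exp_add]; simp
  have hT0 : 0 ≤ T := by
    have h1β : 1 + β ≤ Real.exp β := by linarith [Real.add_one_le_exp β]
    rw [hTdef]
    linarith [mul_le_mul_of_nonneg_left h1β hE0.le, hEmul]
  have hT2 : T ≤ β^2 := by linarith [hr1u, pow_nonneg hβ0.le 3]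
  have hN : N = D - 1 := by
    rw [hNdef, hndef, hDdef, Nat.cast_sub (by omega)]; norm_num
  have hN0 : 0 ≤ N := by rw [hN]; linarith
  have hNT0 : 0 ≤ N * T := mul_nonneg hN0 hT0
  have hNTub : N * T ≤ 2 * β := by
    linarith [mul_le_mul_of_nonneg_right (by linarith [hN] : N ≤ D) hT0,
      mul_le_mul_of_nonneg_left hT2 hD0.le,
      mul_le_mul_of_nonneg_right hs2 hβ0.le]
  have hNT1 : N * T ≤ 1 := by linarith
  have h1T0 : 0 ≤ 1 - T := by linarith [hT2, hβsq]
  have hU0 : 0 ≤ U := hUT ▸ pow_nonneg h1T0 n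
  have hU1 : U ≤ 1 := hUT ▸ pow_le_one₀ h1T0 (by linarith)
  have hUlow : 1 - N * T ≤ U := by
    have h := one_add_mul_le_pow (show (-2:ℝ) ≤ -T by linarith [hT2, hβsq]) n
    have e : (1:ℝ) + -T = 1 - T := by ring
    rw [e, ← hNdef] at h
    rw [hUT]
    linarith [h]
  have hUup : U ≤ 1 - N * T + (3/4) * (N*T)^2 := by
    have s1 : 1 - T ≤ Real.exp (-T) := by linarith [Real.add_one_le_exp (-T)]
    have s2 : U ≤ (Real.exp (-T))^n := hUT ▸ pow_le_pow_left₀ h1T0 s1 n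
    have s3 : (Real.exp (-T))^n = Real.exp (-(N*T)) := by
      rw [← Real.exp_nat_mul, ← hNdef]
      congr 1; ring
    have s4 := abs_le.mp (exp_neg_quad hNT0 hNT1)
    rw [s3] at s2
    linarith [s4.2]
  obtain ⟨r1, hr1def⟩ : ∃ r1 : ℝ, r1 = T - (β^2/2 - β^3/3) := ⟨_, rfl⟩
  obtain ⟨r2, hr2def⟩ : ∃ r2 : ℝ, r2 = U - (1 - N*T) := ⟨_, rfl⟩
  obtain ⟨r4, hr4def⟩ : ∃ r4 : ℝ, r4 = E - (1 - β) := ⟨_, rfl⟩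
  obtain ⟨W, hWdef⟩ : ∃ W : ℝ,
      W = N*β^2/2 - N*T + β*(N*T) + (1-β)*r2 + r4*U := ⟨_, rfl⟩
  have hr1u' : r1 ≤ β^4 := by rw [hr1def]; exact hr1u
  have hr1l' : -β^4 ≤ r1 := by rw [hr1def]; exact hr1l
  have hXeq : D * T - D * (E * β^2 / 2) * U - (5/12)/D^2
      = (D*β^3/6 + D*N*β^4/4 - (5/12)/D^2) + D*r1 - (D*β^2/2) * W := by
    rw [hWdef, hr4def, hr2def, hr1def]; ring
  have hD3 : (0:ℝ) < D^3 := by positivity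
  -- piece D*r1
  have hDb4 : D * β^4 ≤ 16 / D^3 := by
    rw [le_div_iff₀ hD3]; linarith [hs4]
  have hDr1u : D * r1 ≤ 16 / D^3 :=
    le_trans (mul_le_mul_of_nonneg_left hr1u' hD0.le) hDb4
  have hDr1l : -(16 / D^3) ≤ D * r1 := by
    have h := mul_le_mul_of_nonneg_left hr1l' hD0.le
    have e : D * (-β^4) = -(D * β^4) := by ring
    rw [e] at h
    linarith
  -- piece W
  have hNltD : N ≤ D := by linarith [hN]
  have hNb3 : N * β^3 ≤ D * β^3 :=
    mul_le_mul_of_nonneg_right hNltD (pow_nonneg hβ0.le 3)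
  have hNb43 : N * β^4 ≤ N * (β^3/4) :=
    mul_le_mul_of_nonneg_left hβ434 hN0
  have hNr1 : N * r1 = N*T - N*(β^2/2 - β^3/3) := by rw [hr1def]; ring
  have hNr1u := mul_le_mul_of_nonneg_left hr1u' hN0
  have hNr1l := mul_le_mul_of_nonneg_left hr1l' hN0
  have hp1u : N*β^2/2 - N*T ≤ D*β^3 := by
    linarith [hNr1, hNr1l, hNb43, hNb3, mul_nonneg hN0 (pow_nonneg hβ0.le 3)]
  have hp1l : -(D*β^3) ≤ N*β^2/2 - N*T := by
    linarith [hNr1, hNr1u, hNb43, hNb3, mul_nonneg hN0 (pow_nonneg hβ0.le 3)]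
  have hp2u : β*(N*T) ≤ 2*β^2 := by
    linarith [mul_le_mul_of_nonneg_left hNTub hβ0.le]
  have hp2l : 0 ≤ β*(N*T) := mul_nonneg hβ0.le hNT0
  have hr2u : r2 ≤ 3*β^2 := by
    rw [hr2def]
    linarith [hUup, mul_self_le_mul_self hNT0 hNTub]
  have hr2l : 0 ≤ r2 := by rw [hr2def]; linarith
  have hp3u : (1-β)*r2 ≤ 3*β^2 := by
    linarith [mul_le_mul_of_nonneg_left hr2u (by linarith : (0:ℝ) ≤ 1-β),
      pow_nonneg hβ0.le 3, mul_nonneg hβ0.le hr2l]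
  have hp3l : 0 ≤ (1-β)*r2 := mul_nonneg (by linarith) hr2l
  have hr4u : r4 ≤ (3/4) * β^2 := by rw [hr4def]; linarith [hq2.2]
  have hr4l : -((3/4) * β^2) ≤ r4 := by rw [hr4def]; linarith [hq2.1]
  have hp4u : r4*U ≤ (3/4)*β^2 := by
    linarith [mul_le_mul_of_nonneg_right hr4u hU0,
      mul_nonneg (mul_nonneg (by norm_num : (0:ℝ) ≤ 3/4) (sq_nonneg β)) (by linarith : (0:ℝ) ≤ 1 - U)]
  have hp4l : -((3/4)*β^2) ≤ r4*U := by
    linarith [mul_le_mul_of_nonneg_right hr4l hU0,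
      mul_nonneg (mul_nonneg (by norm_num : (0:ℝ) ≤ 3/4) (sq_nonneg β)) (by linarith : (0:ℝ) ≤ 1 - U)]
  have hWu : W ≤ D*β^3 + 6*β^2 := by
    rw [hWdef]; linarith
  have hWl : -(D*β^3 + 6*β^2) ≤ W := by
    rw [hWdef]
    linarith [hp1l, hp2l, hp3l, hp4l, sq_nonneg β, mul_nonneg hD0.le (pow_nonneg hβ0.le 3)]
  have hhalf0 : (0:ℝ) ≤ D*β^2/2 := by positivity
  have hWbig : (D*β^2/2) * (D*β^3 + 6*β^2) ≤ 64 / D^3 := by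
    rw [le_div_iff₀ hD3]; linarith [hs5, hs4]
  have hPWu : (D*β^2/2) * W ≤ 64 / D^3 :=
    le_trans (mul_le_mul_of_nonneg_left hWu hhalf0) hWbig
  have hPWl : -(64 / D^3) ≤ (D*β^2/2) * W := by
    have h := mul_le_mul_of_nonneg_left hWl hhalf0
    linarith only [hWbig, h]
  -- piece M5
  have hsD : D * β * D ≤ D + A := by
    have h := mul_le_mul_of_nonneg_right h2 hD0.le
    have e : (1 + A/D) * D = D + A := by field_simp
    rw [e] at h
    exact h
  have hBl : 0 ≤ (D*β)^3/6 + (D*β)^4/4 - 5/12 := by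
    linarith [mul_nonneg (sub_nonneg.mpr h1) (sq_nonneg (D*β)),
      mul_nonneg (sub_nonneg.mpr h1) hs0, sub_nonneg.mpr h1,
      mul_nonneg (mul_nonneg (sub_nonneg.mpr h1) hs0) hs0,
      mul_nonneg (mul_nonneg (mul_nonneg (sub_nonneg.mpr h1) hs0) hs0) hs0]
  have h3b : (D*β)^3 - 1 ≤ 7*(D*β - 1) := by
    linarith [mul_nonneg (mul_nonneg (sub_nonneg.mpr h1) h2s) (by linarith : (0:ℝ) ≤ D*β + 3)]
  have h4b : (D*β)^4 - 1 ≤ 15*(D*β - 1) := by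
    linarith [mul_nonneg (mul_nonneg (sub_nonneg.mpr h1) h2s)
      (by linarith [sq_nonneg (D*β)] : (0:ℝ) ≤ (D*β)^2 + 3*(D*β) + 7)]
  have hBu : (D*β)^3/6 + (D*β)^4/4 - 5/12 ≤ 5*(D*β - 1) := by linarith
  have hM5eq : D*β^3/6 + D*N*β^4/4 - (5/12)/D^2
      = ((D*β)^3/6 + (D*β)^4/4 - 5/12)/D^2 - (D*β)^4/(4*D^3) := by
    rw [hN]; field_simp; ring
  have hBD : ((D*β)^3/6 + (D*β)^4/4 - 5/12) * D ≤ 5*A := by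
    linarith [mul_le_mul_of_nonneg_right hBu hD0.le, hsD]
  have hBu2 : ((D*β)^3/6 + (D*β)^4/4 - 5/12) / D^2 ≤ 5*A/D^3 := by
    rw [div_le_div_iff₀ (by positivity) hD3]
    linarith [mul_le_mul_of_nonneg_right hBD (sq_nonneg D)]
  have hq4 : (D*β)^4/(4*D^3) ≤ 4/D^3 := by
    rw [div_le_div_iff₀ (by positivity) hD3]
    linarith [mul_nonneg (sub_nonneg.mpr hs4) hD3.le]
  have hM5u : D*β^3/6 + D*N*β^4/4 - (5/12)/D^2 ≤ (20 + 5*A)/D^3 := by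
    rw [hM5eq]
    have h20 : (0:ℝ) ≤ 20/D^3 := by positivity
    have hnn : 0 ≤ (D*β)^4/(4*D^3) := by positivity
    have he : (20+5*A)/D^3 = 20/D^3 + 5*A/D^3 := by ring
    linarith
  have hM5l : -((20 + 5*A)/D^3) ≤ D*β^3/6 + D*N*β^4/4 - (5/12)/D^2 := by
    rw [hM5eq]
    have hBl2 : 0 ≤ ((D*β)^3/6 + (D*β)^4/4 - 5/12)/D^2 := by positivity
    have he : (20+5*A)/D^3 = 20/D^3 + 5*A/D^3 := by ring
    have h5A : (0:ℝ) ≤ 5*A/D^3 := by positivity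
    have h16 : (0:ℝ) ≤ 16/D^3 := by positivity
    have he2 : (4:ℝ)/D^3 + 16/D^3 = 20/D^3 := by ring
    linarith only [hq4, hBl2, h5A, h16, he, he2]
  -- finish
  rw [abs_le]
  have he : (100+5*A)/D^3 = (20+5*A)/D^3 + 16/D^3 + 64/D^3 := by ring
  constructor
  · rw [hXeq]; linarith only [hM5l, hDr1l, hPWu, he]
  · rw [hXeq]; linarith only [hM5u, hDr1u, hPWl, he]

/-- For every `A > 0` there exist `C > 0` and `d₀ ∈ ℕ` such that for all
integers `d ≥ d₀` and all `α ∈ [0, A]`, setting `β = 1/d + α/d²`, one has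
`|d·p_{≥2}(β) − d·p₂(β)·(1 − p_{≥2}(β))^{d−1} − (5/12)/d²| ≤ C/d³`. -/
theorem sum_k_PA_prime_expansion (A : ℝ) (hA : 0 < A) :
    ∃ C : ℝ, 0 < C ∧ ∃ d₀ : ℕ, ∀ d : ℕ, d₀ ≤ d → ∀ α ∈ Set.Icc (0 : ℝ) A,
      ∀ β : ℝ, β = 1 / (d : ℝ) + α / (d : ℝ) ^ 2 →
        |(d : ℝ) * poissonTail β 2
            - (d : ℝ) * poissonProb β 2 * (1 - poissonTail β 2) ^ (d - 1)
            - (5 / 12) / (d : ℝ) ^ 2|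
          ≤ C / (d : ℝ) ^ 3 := by
  refine ⟨100 + 5*A, by linarith, 8 + ⌈A⌉₊, fun d hd α hα β hβ => ?_⟩
  have hd8 : 8 ≤ d := by omega
  have hD0 : (0:ℝ) < (d:ℝ) := by positivity
  have hdA : A ≤ (d:ℝ) := by
    calc A ≤ (⌈A⌉₊ : ℝ) := Nat.le_ceil A
    _ ≤ (d:ℝ) := by exact_mod_cast (by omega : ⌈A⌉₊ ≤ d)
  have hDβ : (d:ℝ) * β = 1 + α / (d:ℝ) := by
    rw [hβ]; field_simp
  have h1 : 1 ≤ (d:ℝ) * β := by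
    rw [hDβ]
    have : 0 ≤ α / (d:ℝ) := div_nonneg hα.1 hD0.le
    linarith
  have h2 : (d:ℝ) * β ≤ 1 + A / (d:ℝ) := by
    rw [hDβ]
    have : α / (d:ℝ) ≤ A / (d:ℝ) := by gcongr; exact hα.2
    linarith
  rw [poissonTail_two, poissonProb_two,
    show (1 : ℝ) - (1 - Real.exp (-β) * (1 + β)) = Real.exp (-β) * (1+β) from by ring]
  exact key_est A hA d hd8 hdA β h1 h2
end

section
/- For every A > 0 there exist constants C > 0 and d₀ ∈ ℕ such that for all integers d ≥ d₀ and all α ∈ [0, A], setting β = 1/d + α/d², one has |1 − (1 − p_{≥2}(β))^d − d·p₂(β)·(1 − p_{≥2}(β))^{d−1} − (7/24)/d²| ≤ C/d³. -/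
lemma poisson_summable (β : ℝ) : Summable (fun j => poissonProb β j) := by
  have h := (Real.summable_pow_div_factorial β).mul_left (Real.exp (-β))
  refine h.congr fun j => ?_
  simp [poissonProb, mul_div_assoc]

lemma poisson_tsum (β : ℝ) : ∑' j : ℕ, poissonProb β j = 1 := by
  have h : ∑' j : ℕ, poissonProb β j = Real.exp (-β) * ∑' j : ℕ, β ^ j / (Nat.factorial j) := by
    rw [← tsum_mul_left]
    exact tsum_congr fun j => by simp [poissonProb, mul_div_assoc]
  have hexp : ∑' j : ℕ, β ^ j / (Nat.factorial j) = Real.exp β := by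
    rw [Real.exp_eq_exp_ℝ, NormedSpace.exp_eq_tsum_div]
  rw [h, hexp, ← Real.exp_add]
  simp

lemma one_sub_poissonTail_two (β : ℝ) : 1 - poissonTail β 2 = Real.exp (-β) * (1 + β) := by
  have hsum := poisson_summable β
  have hf : Summable (fun j => if 2 ≤ j then poissonProb β j else 0) := by
    refine Summable.of_norm_bounded hsum.abs fun j => ?_
    by_cases h : 2 ≤ j <;> simp [h, abs_nonneg]
  have h1 := Summable.sum_add_tsum_nat_add 2 hsum
  have h2 := Summable.sum_add_tsum_nat_add 2 hf
  have h3 : ∑' i : ℕ, (if 2 ≤ i + 2 then poissonProb β (i + 2) else 0)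
      = ∑' i : ℕ, poissonProb β (i + 2) := by
    exact tsum_congr fun i => by simp [Nat.le_add_left]
  have h4 : poissonTail β 2 = ∑' i : ℕ, poissonProb β (i + 2) := by
    rw [poissonTail, ← h2, h3]
    simp [Finset.sum_range_succ]
  have h5 : ∑' i : ℕ, poissonProb β (i + 2) = 1 - poissonProb β 0 - poissonProb β 1 := by
    have ht := poisson_tsum β
    rw [← ht, ← h1]
    simp [Finset.sum_range_succ]
    ring
  rw [h4, h5]
  simp [poissonProb, Nat.factorial]
  ring


set_option maxHeartbeats 4000000 in
lemma key_est_s11 (A : ℝ) (hA : 0 < A) (n α : ℝ) (hn : 12 + A ≤ n) (hα0 : 0 ≤ α) (hαA : α ≤ A)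
    (β u : ℝ) (hβ : β = 1/n + α/n^2) (hu : u = β - Real.log (1+β)) :
    |1 - Real.exp (-(n*u)) - n * (Real.exp (-β) * β^2 / 2) * Real.exp (-((n-1)*u)) - 7/24/n^2|
      ≤ (300 + 10*(1+A)^6)/n^3 := by
  have hn0 : (0:ℝ) < n := by linarith
  obtain ⟨x, hxdef⟩ : ∃ y : ℝ, y = 1/n := ⟨_, rfl⟩
  have hx0 : 0 < x := by rw [hxdef]; positivity
  have hnx : n * x = 1 := by rw [hxdef]; field_simp
  have hx12 : x ≤ 1/12 := by
    rw [hxdef, div_le_div_iff₀ hn0 (by norm_num)]; linarith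
  have hβx : β = x + α * x^2 := by rw [hβ, hxdef]; ring
  have hαx : α * x ≤ 1 := by nlinarith
  have hβ1 : x ≤ β := by nlinarith
  have hβ2 : β ≤ 2 * x := by nlinarith
  have hβ0 : 0 < β := by linarith
  have hβ6 : β ≤ 1/6 := by linarith
  have hx1 : x ≤ 1 := by linarith
  have hu0 : 0 ≤ u := by
    have := Real.log_le_sub_one_of_pos (show (0:ℝ) < 1 + β by linarith)
    rw [hu]; linarith
  -- log remainder bound
  have hρ0 : |u - (β^2/2 - β^3/3)| ≤ 2 * β^4 := by
    have habs : |(-β)| < 1 := by rw [abs_neg, abs_of_pos hβ0]; linarith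
    have hlog := Real.abs_log_sub_add_sum_range_le habs 3
    simp only [Finset.sum_range_succ, Finset.sum_range_zero] at hlog
    rw [abs_neg, abs_of_pos hβ0] at hlog
    have heq : (0 + (-β)^(0+1)/((0:ℕ)+1) + (-β)^(1+1)/((1:ℕ)+1) + (-β)^(2+1)/((2:ℕ)+1))
        + Real.log (1 - -β) = -(u - (β^2/2 - β^3/3)) := by
      rw [hu]; push_cast; ring_nf
    rw [heq, abs_neg] at hlog
    calc |u - (β^2/2 - β^3/3)| ≤ β^4 / (1-β) := hlog
      _ ≤ 2 * β^4 := by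
          rw [div_le_iff₀ (by linarith)]
          nlinarith [pow_nonneg hβ0.le 4]
  have hρ0' := abs_le.mp hρ0
  have hubd : u ≤ β^2 := by nlinarith [pow_nonneg hβ0.le 3, pow_nonneg hβ0.le 4]
  have hnb : n * β^2 ≤ 4 * x := by nlinarith [sq_nonneg (β - 2*x)]
  have hs4 : n * u ≤ 4 * x := by nlinarith [mul_le_mul_of_nonneg_left hubd hn0.le]
  have hsnn : 0 ≤ n * u := by positivity
  -- first exp bound
  have E1 : |Real.exp (-(n*u)) - (1 - n*u + (n*u)^2/2)| ≤ (2/9) * (n*u)^3 := by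
    have habs : |(-(n*u))| ≤ 1 := by rw [abs_neg, abs_of_nonneg hsnn]; linarith
    have h := Real.exp_bound habs (by norm_num : 0 < 3)
    simp only [Finset.sum_range_succ, Finset.sum_range_zero] at h
    rw [abs_neg, abs_of_nonneg hsnn] at h
    have heq : (0 + (-(n*u))^0/(Nat.factorial 0 : ℝ) + (-(n*u))^1/(Nat.factorial 1 : ℝ)
        + (-(n*u))^2/(Nat.factorial 2 : ℝ)) = 1 - n*u + (n*u)^2/2 := by
      simp [Nat.factorial]; ring
    rw [heq] at h
    calc |Real.exp (-(n*u)) - (1 - n*u + (n*u)^2/2)|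
        ≤ (n*u)^3 * ((3:ℕ).succ / ((Nat.factorial 3 : ℝ) * 3)) := h
      _ = (2/9) * (n*u)^3 := by simp [Nat.factorial]; ring
  obtain ⟨w, hwdef⟩ : ∃ y : ℝ, y = β + (n-1)*u := ⟨_, rfl⟩
  have hw0 : 0 ≤ w := by
    have : 0 ≤ (n-1)*u := mul_nonneg (by linarith) hu0
    rw [hwdef]; linarith
  have hw6 : w ≤ 6 * x := by
    have h1 : (n-1)*u ≤ n*u := by nlinarith
    rw [hwdef]; linarith
  have E2 : |Real.exp (-w) - (1 - w)| ≤ w^2 := by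
    have habs : |(-w)| ≤ 1 := by rw [abs_neg, abs_of_nonneg hw0]; linarith
    have h := Real.exp_bound habs (by norm_num : 0 < 2)
    simp only [Finset.sum_range_succ, Finset.sum_range_zero] at h
    rw [abs_neg, abs_of_nonneg hw0] at h
    have heq : (0 + (-w)^0/(Nat.factorial 0 : ℝ) + (-w)^1/(Nat.factorial 1 : ℝ)) = 1 - w := by
      simp [Nat.factorial]; ring
    rw [heq] at h
    calc |Real.exp (-w) - (1 - w)|
        ≤ w^2 * ((2:ℕ).succ / ((Nat.factorial 2 : ℝ) * 2)) := h
      _ ≤ w^2 := by simp [Nat.factorial]; nlinarith [sq_nonneg w]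
  -- remainder notation
  obtain ⟨v, hvdef⟩ : ∃ y : ℝ, y = β^2/2 - β^3/3 := ⟨_, rfl⟩
  obtain ⟨ρ, hρdef⟩ : ∃ y : ℝ, y = u - v := ⟨_, rfl⟩
  have hρbd : |ρ| ≤ 32 * x^4 := by
    have h16 : β^4 ≤ 16 * x^4 := by nlinarith [pow_le_pow_left₀ hβ0.le hβ2 4]
    have : |ρ| ≤ 2 * β^4 := by rw [hρdef, hvdef]; exact hρ0
    linarith
  have hv0 : 0 ≤ v := by rw [hvdef]; nlinarith
  have hv2 : v ≤ β^2/2 := by rw [hvdef]; nlinarith [pow_nonneg hβ0.le 3]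
  have hnv0 : 0 ≤ n * v := mul_nonneg hn0.le hv0
  have hnv2 : n * v ≤ 2 * x := by nlinarith [mul_le_mul_of_nonneg_left hv2 hn0.le]
  have hnρ : |n * ρ| ≤ 32 * x^3 := by
    rw [abs_mul, abs_of_pos hn0]
    calc n * |ρ| ≤ n * (32 * x^4) := mul_le_mul_of_nonneg_left hρbd hn0.le
      _ = 32 * (n*x) * x^3 := by ring
      _ = 32 * x^3 := by rw [hnx]; ring
  have hnρ' := abs_le.mp hnρ
  have hx3nn : (0:ℝ) ≤ x^3 := by positivity
  have hnρ2 : (n*ρ)^2/2 ≤ x^3 := by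
    have h := pow_le_pow_left₀ (abs_nonneg (n*ρ)) hnρ 2
    rw [sq_abs (n*ρ)] at h
    have h1 := pow_le_pow_left₀ hx0.le hx12 3
    norm_num at h1
    have hx33 : x^6 ≤ (1/1728) * x^3 := by
      calc x^6 = x^3 * x^3 := by ring
        _ ≤ (1/1728) * x^3 := by
            rw [mul_comm (1/1728 : ℝ)]
            exact mul_le_mul_of_nonneg_left h1 hx3nn
    linarith [h, hx33]
  have hnvnρ : |(n*v) * (n*ρ)| ≤ 32 * x^3 := by
    rw [abs_mul, abs_of_nonneg hnv0]
    have h1 : n*v ≤ 1 := by linarith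
    calc n*v * |n*ρ| ≤ 1 * |n*ρ| := mul_le_mul_of_nonneg_right h1 (abs_nonneg _)
      _ = |n*ρ| := one_mul _
      _ ≤ 32 * x^3 := hnρ
  have hnvnρ' := abs_le.mp hnvnρ
  have hlast : |(n*β^2/2) * ((n-1)*ρ)| ≤ 32 * x^3 := by
    rw [abs_mul, abs_mul, abs_of_nonneg (by positivity : (0:ℝ) ≤ n*β^2/2),
      abs_of_nonneg (by linarith : (0:ℝ) ≤ n - 1)]
    have h1 : n*β^2/2 ≤ 1 := by linarith
    have h2 : (n-1) * |ρ| ≤ n * |ρ| :=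
      mul_le_mul_of_nonneg_right (by linarith) (abs_nonneg _)
    have h3 : n * |ρ| ≤ 32 * x^3 := by rw [abs_mul, abs_of_pos hn0] at hnρ; exact hnρ
    calc n*β^2/2 * ((n-1) * |ρ|) ≤ 1 * ((n-1) * |ρ|) :=
          mul_le_mul_of_nonneg_right h1
            (mul_nonneg (by linarith) (abs_nonneg _))
      _ = (n-1) * |ρ| := one_mul _
      _ ≤ n * |ρ| := h2
      _ ≤ 32 * x^3 := h3
  have hlast' := abs_le.mp hlast
  -- polynomial part
  obtain ⟨G, hGdef⟩ : ∃ y : ℝ, y = α - 1/4 + (1/9)*(x^1*α^0) - x^1*α^1 + (5/4)*(x^1*α^2)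
      + (1/2)*(x^2*α^1) - (3/2)*(x^2*α^2) + (2/3)*(x^2*α^3) + (5/6)*(x^3*α^2) - x^3*α^3
      + (1/8)*(x^3*α^4) + (5/9)*(x^4*α^3) - (1/4)*(x^4*α^4) - (1/6)*(x^6*α^5)
      - (1/18)*(x^7*α^6) := ⟨_, rfl⟩
  have hmono : ∀ i j : ℕ, j ≤ 6 → x^i * α^j ≤ (1+A)^6 := by
    intro i j hj
    have h1 : x^i ≤ 1 := pow_le_one₀ hx0.le hx1
    have h2 : α^j ≤ (1+A)^j := pow_le_pow_left₀ hα0 (by linarith) j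
    have h3 : (1+A)^j ≤ (1+A)^6 := pow_le_pow_right₀ (by linarith) hj
    have h4 : 0 ≤ α^j := pow_nonneg hα0 j
    calc x^i * α^j ≤ 1 * (1+A)^6 := mul_le_mul h1 (h2.trans h3) h4 zero_le_one
      _ = (1+A)^6 := one_mul _
  have hmn : ∀ i j : ℕ, 0 ≤ x^i * α^j :=
    fun i j => mul_nonneg (pow_nonneg hx0.le _) (pow_nonneg hα0 _)
  have hGbd : |G| ≤ 10*(1+A)^6 := by
    have hα6 : α ≤ (1+A)^6 := by
      calc α ≤ A := hαA
        _ ≤ (1+A)^1 := by linarith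
        _ ≤ (1+A)^6 := pow_le_pow_right₀ (by linarith) (by norm_num)
    rw [hGdef, abs_le]
    constructor <;>
    linarith [hmono 1 0 (by norm_num), hmono 1 1 (by norm_num),
      hmono 1 2 (by norm_num), hmono 2 1 (by norm_num), hmono 2 2 (by norm_num),
      hmono 2 3 (by norm_num), hmono 3 2 (by norm_num), hmono 3 3 (by norm_num),
      hmono 3 4 (by norm_num), hmono 4 3 (by norm_num), hmono 4 4 (by norm_num),
      hmono 6 5 (by norm_num), hmono 7 6 (by norm_num),
      hmn 1 0, hmn 1 1, hmn 1 2, hmn 2 1, hmn 2 2, hmn 2 3, hmn 3 2,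
      hmn 3 3, hmn 3 4, hmn 4 3, hmn 4 4, hmn 6 5, hmn 7 6,
      pow_nonneg (by linarith : (0:ℝ) ≤ 1+A) 6,
      one_le_pow₀ (by linarith : (1:ℝ) ≤ 1+A) (n := 6)]
  have hGbd' := abs_le.mp hGbd
  -- combine
  have hEF : Real.exp (-β) * Real.exp (-((n-1)*u)) = Real.exp (-w) := by
    rw [← Real.exp_add]; congr 1; rw [hwdef]; ring
  have hexp : n * (Real.exp (-β) * β^2 / 2) * Real.exp (-((n-1)*u))
      = n * β^2 / 2 * Real.exp (-w) := by rw [← hEF]; ring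
  have hnu3 : (n*u)^3 ≤ 64 * x^3 := by
    calc (n*u)^3 ≤ (4*x)^3 := pow_le_pow_left₀ hsnn hs4 3
      _ = 64 * x^3 := by ring
  have hEAbd := abs_le.mp E1
  have hw2 : w^2 ≤ 36 * x^2 := by
    calc w^2 ≤ (6*x)^2 := pow_le_pow_left₀ hw0 hw6 2
      _ = 36 * x^2 := by ring
  have hcEB : |n * β^2/2 * (Real.exp (-w) - (1-w))| ≤ 72 * x^3 := by
    rw [abs_mul, abs_of_nonneg (by positivity : (0:ℝ) ≤ n*β^2/2)]
    calc n*β^2/2 * |Real.exp (-w) - (1-w)| ≤ n*β^2/2 * w^2 :=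
          mul_le_mul_of_nonneg_left E2 (by positivity)
      _ ≤ 2*x * (36*x^2) := by
          apply mul_le_mul (by linarith) hw2 (sq_nonneg w) (by positivity)
      _ = 72 * x^3 := by ring
  have hcEB' := abs_le.mp hcEB
  have hGx : |x^3 * G| ≤ 10*(1+A)^6 * x^3 := by
    rw [abs_mul, abs_of_nonneg hx3nn]
    calc x^3 * |G| ≤ x^3 * (10*(1+A)^6) := mul_le_mul_of_nonneg_left hGbd hx3nn
      _ = 10*(1+A)^6 * x^3 := by ring
  have hGx' := abs_le.mp hGx
  have hR : n*v - (n*v)^2/2 - (n*β^2/2)*(1 - β - (n-1)*v) - 7/24/n^2 = x^3*G := by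
    have hn' : n = 1/x := by rw [hxdef, one_div_one_div]
    rw [hGdef, hvdef, hβx, hn']
    field_simp
    ring
  have hgoal : 1 - Real.exp (-(n*u)) - n * β^2/2 * Real.exp (-w) - 7/24/n^2
      = -(Real.exp (-(n*u)) - (1 - n*u + (n*u)^2/2))
        - n * β^2/2 * (Real.exp (-w) - (1-w))
        + x^3 * G
        + (n*ρ - (n*ρ)^2/2 - (n*v)*(n*ρ) + (n*β^2/2)*((n-1)*ρ)) := by
    rw [← hR, hρdef, hwdef]
    ring
  rw [hexp, show (300 + 10*(1+A)^6)/n^3 = (300 + 10*(1+A)^6)*x^3 by rw [hxdef]; ring,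
    hgoal, abs_le]
  constructor <;>
  linarith [hEAbd.1, hEAbd.2, hcEB'.1, hcEB'.2, hGx'.1, hGx'.2, hnρ'.1, hnρ'.2, hnρ2,
    hnvnρ'.1, hnvnρ'.2, hlast'.1, hlast'.2, hnu3, hx3nn, sq_nonneg (n*ρ),
    mul_nonneg (mul_nonneg (by norm_num : (0:ℝ) ≤ 10) (pow_nonneg (by linarith : (0:ℝ) ≤ 1+A) 6)) hx3nn]



/-- For every `A > 0` there exist `C > 0` and `d₀ ∈ ℕ` such that for all
integers `d ≥ d₀` and all `α ∈ [0, A]`, setting `β = 1/d + α/d²`, one has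
`|1 − (1 − p_{≥2}(β))^d − d·p₂(β)·(1 − p_{≥2}(β))^{d−1} − (7/24)/d²| ≤ C/d³`. -/
theorem sum_PA_prime_expansion (A : ℝ) (hA : 0 < A) :
    ∃ C : ℝ, 0 < C ∧ ∃ d₀ : ℕ, ∀ d : ℕ, d₀ ≤ d → ∀ α ∈ Set.Icc (0 : ℝ) A,
      ∀ β : ℝ, β = 1 / (d : ℝ) + α / (d : ℝ) ^ 2 →
        |1 - (1 - poissonTail β 2) ^ d
            - (d : ℝ) * poissonProb β 2 * (1 - poissonTail β 2) ^ (d - 1)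
            - (7 / 24) / (d : ℝ) ^ 2|
          ≤ C / (d : ℝ) ^ 3 := by
  refine ⟨300 + 10*(1+A)^6, by positivity, ⌈(12:ℝ) + A⌉₊, ?_⟩
  intro d hd α hα β hβ
  obtain ⟨hα0, hαA⟩ := hα
  have hn : 12 + A ≤ (d:ℝ) := by
    calc (12:ℝ) + A ≤ (⌈(12:ℝ)+A⌉₊ : ℝ) := Nat.le_ceil _
      _ ≤ d := Nat.cast_le.mpr hd
  have hn0 : (0:ℝ) < d := by linarith
  have hd1 : 1 ≤ d := by
    by_contra h
    push_neg at h
    interval_cases d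
    · simp at hn0
  have hβ0 : 0 < β := by
    rw [hβ]
    have h1 : 0 < 1/(d:ℝ) := by positivity
    have h2 : 0 ≤ α/(d:ℝ)^2 := by positivity
    linarith
  set u : ℝ := β - Real.log (1+β) with hu
  have hq : 1 - poissonTail β 2 = Real.exp (-u) := by
    rw [one_sub_poissonTail_two]
    rw [show -u = Real.log (1+β) - β by rw [hu]; ring, Real.exp_sub,
      Real.exp_log (by linarith : (0:ℝ) < 1+β)]
    rw [div_eq_mul_inv, ← Real.exp_neg]
    ring
  have hp2 : poissonProb β 2 = Real.exp (-β) * β^2 / 2 := by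
    rw [poissonProb]
    norm_num [Nat.factorial]
  have hpow : (1 - poissonTail β 2)^d = Real.exp (-((d:ℝ)*u)) := by
    rw [hq, ← Real.exp_nat_mul]
    congr 1
    ring
  have hpow1 : (1 - poissonTail β 2)^(d-1) = Real.exp (-(((d:ℝ)-1)*u)) := by
    rw [hq, ← Real.exp_nat_mul]
    congr 1
    rw [Nat.cast_sub hd1]
    push_cast
    ring
  rw [hpow, hpow1, hp2]
  exact key_est_s11 A hA d α hn hα0 hαA β u hβ hu
end

section
/- For every ε ∈ (0,1) there exists d₀ ∈ ℕ such that for every integer d ≥ d₀ the following holds: if a sequence (σ_m)_{m≥0} with values in [0,1] satisfies σ_m ≤ (1 − ε/d) · Σ_{ℓ=3}^m σ_{m−ℓ} · (1/d²)^{ℓ−3} for all m ≥ 3, then σ_k ≤ (1 − ε/(6d))^{k−2} for all k ≥ 0. In particular σ_k → 0 exponentially fast as k → ∞. -/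
private lemma geom_aux {x : ℝ} (h0 : 0 ≤ x) (h1 : x < 1) (n : ℕ) :
    ∑ i ∈ Finset.range n, x ^ i ≤ (1 - x)⁻¹ := by
  have h : (0:ℝ) < 1 - x := by linarith
  rw [geom_sum_eq (ne_of_lt h1)]
  have heq : (x ^ n - 1) / (x - 1) = (1 - x ^ n) / (1 - x) := by
    rw [div_eq_div_iff (by intro hc; rw [sub_eq_zero] at hc; exact (ne_of_lt h1) hc)
      (ne_of_gt h)]
    ring
  rw [heq, div_le_iff₀ h, inv_mul_cancel₀ (ne_of_gt h)]
  have := pow_nonneg h0 n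
  linarith

/-- For every `ε ∈ (0,1)` there exists `d₀ ∈ ℕ` such that for every
integer `d ≥ d₀` the following holds: if a sequence `(σ_m)_{m≥0}` with values in `[0,1]`
satisfies `σ_m ≤ (1 − ε/d) · Σ_{ℓ=3}^m σ_{m−ℓ} · (1/d²)^{ℓ−3}` for all `m ≥ 3`, then
`σ_k ≤ (1 − ε/(6d))^{k−2}` for all `k ≥ 0`; in particular `σ_k → 0` as `k → ∞`. -/
theorem exponential_decay_recursion (ε : ℝ) (hε : ε ∈ Set.Ioo (0 : ℝ) 1) :
    ∃ d₀ : ℕ, ∀ d : ℕ, d₀ ≤ d → ∀ σ : ℕ → ℝ,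
      (∀ m, σ m ∈ Set.Icc (0 : ℝ) 1) →
      (∀ m : ℕ, 3 ≤ m →
        σ m ≤ (1 - ε / (d : ℝ)) *
          ∑ ℓ ∈ Finset.Icc 3 m, σ (m - ℓ) * ((1 : ℝ) / (d : ℝ) ^ 2) ^ (ℓ - 3)) →
      (∀ k : ℕ, σ k ≤ (1 - ε / (6 * (d : ℝ))) ^ (k - 2)) ∧
        Filter.Tendsto σ Filter.atTop (nhds 0) := by
  obtain ⟨hε0, hε1⟩ := hε
  refine ⟨⌈(3:ℝ) / ε⌉₊ + 1, fun d hd σ hσ hrec => ?_⟩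
  have hD' : ((3:ℝ)/ε) ≤ (⌈(3:ℝ)/ε⌉₊ : ℝ) := Nat.le_ceil _
  have hdle : (⌈(3:ℝ)/ε⌉₊ : ℝ) ≤ (d:ℝ) := by exact_mod_cast le_trans (Nat.le_succ _) hd
  set D : ℝ := (d:ℝ) with hDdef
  have hεD : 3 ≤ ε * D := by
    rw [div_le_iff₀ hε0] at hD'
    nlinarith
  have hD3 : (3:ℝ) ≤ D := by nlinarith
  have hDpos : (0:ℝ) < D := by linarith
  set t : ℝ := ε / D with htdef
  have ht0 : 0 < t := div_pos hε0 hDpos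
  have ht1 : t < 1 := by rw [htdef, div_lt_one hDpos]; linarith
  set q : ℝ := 1 - ε / (6 * D) with hqdef
  have hqt : q = 1 - t / 6 := by rw [hqdef, htdef]; ring
  have hq0 : 0 < q := by rw [hqt]; linarith
  have hq1 : q < 1 := by rw [hqt]; linarith
  set r : ℝ := 1 / D ^ 2 with hrdef
  have hr0 : 0 < r := by positivity
  have hrt : r ≤ t / 3 := by
    have h : ε / D * D ^ 2 = ε * D := by field_simp
    rw [hrdef, htdef, div_le_div_iff₀ (by positivity) (by positivity)]
    linarith [h]
  have hrq : r / q < 1 := by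
    rw [div_lt_one hq0, hqt]; nlinarith
  have hrq0 : 0 ≤ r / q := by positivity
  have key : (1 - t) ≤ q ^ 3 * (1 - r / q) := by
    have h : q ^ 3 * (1 - r / q) = q ^ 3 - q ^ 2 * r := by
      field_simp
    rw [h, hqt]
    nlinarith [sq_nonneg t, sq_nonneg (t - 1), ht0.le, hrt, hr0.le]
  clear_value D t q r
  have main : ∀ k : ℕ, σ k ≤ q ^ (k - 2) := by
    intro k
    induction k using Nat.strong_induction_on with
    | _ k ih =>
      rcases lt_or_ge k 3 with hk | hk
      · interval_cases k <;> simpa using (hσ _).2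
      · have h1t : (0:ℝ) ≤ 1 - t := by linarith
        calc σ k ≤ (1 - t) * ∑ ℓ ∈ Finset.Icc 3 k, σ (k - ℓ) * r ^ (ℓ - 3) := hrec k hk
          _ ≤ (1 - t) * ∑ ℓ ∈ Finset.Icc 3 k, (q ^ (k - 2) * (1 / q ^ 3)) * (r / q) ^ (ℓ - 3) := by
              apply mul_le_mul_of_nonneg_left _ h1t
              apply Finset.sum_le_sum
              intro ℓ hℓ
              obtain ⟨hℓ3, hℓk⟩ := Finset.mem_Icc.mp hℓ
              obtain ⟨j, rfl⟩ : ∃ j, ℓ = j + 3 := ⟨ℓ - 3, by omega⟩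
              simp only [Nat.add_sub_cancel]
              have hlt : k - (j + 3) < k := by omega
              have h1 : σ (k - (j + 3)) ≤ q ^ (k - (j + 3) - 2) := ih _ hlt
              have h2 : q ^ (k - (j + 3) - 2) * q ^ (j + 3) ≤ q ^ (k - 2) := by
                rw [← pow_add]
                exact pow_le_pow_of_le_one hq0.le hq1.le (by omega)
              have hq3 : q ^ (k - (j + 3) - 2) ≤ q ^ (k - 2) / q ^ (j + 3) := by
                rw [le_div_iff₀ (by positivity)]; exact h2
              calc σ (k - (j + 3)) * r ^ j ≤ (q ^ (k - 2) / q ^ (j + 3)) * r ^ j :=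
                    mul_le_mul (h1.trans hq3) le_rfl (by positivity) (by positivity)
                _ = (q ^ (k - 2) * (1 / q ^ 3)) * (r / q) ^ j := by
                    rw [pow_add, div_pow]; ring
          _ = (1 - t) * ((q ^ (k - 2) * (1 / q ^ 3)) * ∑ ℓ ∈ Finset.Icc 3 k, (r / q) ^ (ℓ - 3)) := by
              rw [← Finset.mul_sum]
          _ ≤ (1 - t) * ((q ^ (k - 2) * (1 / q ^ 3)) * (1 - r / q)⁻¹) := by
              apply mul_le_mul_of_nonneg_left _ h1t
              apply mul_le_mul_of_nonneg_left _ (by positivity)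
              have h : ∑ ℓ ∈ Finset.Icc 3 k, (r / q) ^ (ℓ - 3)
                  = ∑ i ∈ Finset.range (k + 1 - 3), (r / q) ^ i := by
                rw [show Finset.Icc 3 k = Finset.Ico 3 (k+1) by rfl, Finset.sum_Ico_eq_sum_range]
                exact Finset.sum_congr rfl fun i _ => by congr 1; omega
              rw [h]
              exact geom_aux hrq0 hrq _
          _ ≤ q ^ (k - 2) := by
              have hfac : (1 - t) * ((1 / q ^ 3) * (1 - r / q)⁻¹) ≤ 1 := by
                have hpos : (0:ℝ) < q ^ 3 * (1 - r / q) := by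
                  apply mul_pos (by positivity); linarith
                have h : (1 / q ^ 3) * (1 - r / q)⁻¹ = (q ^ 3 * (1 - r / q))⁻¹ := by
                  rw [mul_inv]; ring
                rw [h, ← div_eq_mul_inv, div_le_one hpos]
                exact key
              have hqk : (0:ℝ) ≤ q ^ (k - 2) := by positivity
              calc (1 - t) * ((q ^ (k - 2) * (1 / q ^ 3)) * (1 - r / q)⁻¹)
                  = q ^ (k - 2) * ((1 - t) * ((1 / q ^ 3) * (1 - r / q)⁻¹)) := by ring
                _ ≤ q ^ (k - 2) * 1 := mul_le_mul_of_nonneg_left hfac hqk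
                _ = q ^ (k - 2) := mul_one _
  refine ⟨main, ?_⟩
  have hten : Filter.Tendsto (fun k : ℕ => q ^ (k - 2)) Filter.atTop (nhds 0) :=
    (tendsto_pow_atTop_nhds_zero_of_lt_one hq0.le hq1).comp
      (Filter.tendsto_sub_atTop_nat 2)
  exact squeeze_zero (fun k => (hσ k).1) main hten
end

section
/- Let u ∈ [0,1]. Let U₁, U₂ be independent random variables uniformly distributed on [0,1], set X = min{U₁,U₂} + 1 − max{U₁,U₂}, and let V be a random variable independent of (U₁,U₂) taking the value 0 with probability u², the value 1 with probability (1−u)², and the value 2 with probability 2u(1−u). Define (L, M) = (X, 1−X) if V = 0, (L, M) = (X, X) if V = 1, and (L, M) = (1, 1) if V = 2. Then E[L + M] = 1 + 2u(1−u) + (1/3)(1−u)². -/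
open MeasureTheory ProbabilityTheory

/-- `X = min{U₁,U₂} + 1 − max{U₁,U₂}`, the length of the connected time-interval
determined by the two link times. -/
noncomputable def Xlen (u₁ u₂ : ℝ) : ℝ := min u₁ u₂ + 1 - max u₁ u₂

lemma Xlen_abs (a b : ℝ) : Xlen a b = 1 - |a - b| := by
  unfold Xlen
  rcases le_total a b with h | h
  · rw [min_eq_left h, max_eq_right h, abs_sub_comm, abs_of_nonneg (sub_nonneg.2 h)]; ring
  · rw [min_eq_right h, max_eq_left h, abs_of_nonneg (sub_nonneg.2 h)]; ring

open intervalIntegral in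
lemma inner_abs (x : ℝ) (hx : x ∈ Set.Icc (0:ℝ) 1) :
    ∫ y in Set.Icc (0:ℝ) 1, |x - y| = x^2 - x + 1/2 := by
  obtain ⟨h0, h1⟩ := hx
  rw [MeasureTheory.integral_Icc_eq_integral_Ioc, ← intervalIntegral.integral_of_le zero_le_one,
    ← intervalIntegral.integral_add_adjacent_intervals (b := x)
      ((by fun_prop : Continuous fun y : ℝ => |x - y|).intervalIntegrable 0 x)
      ((by fun_prop : Continuous fun y : ℝ => |x - y|).intervalIntegrable x 1)]
  have e1 : ∫ y in (0:ℝ)..x, |x - y| = ∫ y in (0:ℝ)..x, (x - y) := by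
    apply intervalIntegral.integral_congr
    intro y hy
    rw [Set.uIcc_of_le h0] at hy
    exact abs_of_nonneg (sub_nonneg.2 hy.2)
  have e2 : ∫ y in x..(1:ℝ), |x - y| = ∫ y in x..(1:ℝ), (y - x) := by
    apply intervalIntegral.integral_congr
    intro y hy
    rw [Set.uIcc_of_le h1] at hy
    show |x - y| = y - x
    rw [abs_sub_comm]
    exact abs_of_nonneg (sub_nonneg.2 hy.1)
  have i1 : (∫ y in (0:ℝ)..x, (x - y)) = x ^ 2 / 2 := by
    rw [intervalIntegral.integral_sub intervalIntegrable_const intervalIntegrable_id,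
      integral_id, intervalIntegral.integral_const, smul_eq_mul]
    ring
  have i2 : (∫ y in x..(1:ℝ), (y - x)) = (1 - x) ^ 2 / 2 := by
    rw [intervalIntegral.integral_sub intervalIntegrable_id intervalIntegrable_const,
      integral_id, intervalIntegral.integral_const, smul_eq_mul]
    ring
  rw [e1, e2, i1, i2]
  ring

open intervalIntegral in
lemma integral_Xlen_prod :
    ∫ p : ℝ × ℝ, Xlen p.1 p.2
      ∂((volume.restrict (Set.Icc (0:ℝ) 1)).prod (volume.restrict (Set.Icc (0:ℝ) 1))) = 2/3 := by
  have hvol : volume (Set.Icc (0:ℝ) 1) = 1 := by simp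
  have hprob : IsProbabilityMeasure (volume.restrict (Set.Icc (0:ℝ) 1)) :=
    ⟨by rw [Measure.restrict_apply_univ, hvol]⟩
  have hcont : Continuous fun p : ℝ × ℝ => Xlen p.1 p.2 := by
    unfold Xlen; fun_prop
  have hint : Integrable (fun p : ℝ × ℝ => Xlen p.1 p.2)
      ((volume.restrict (Set.Icc (0:ℝ) 1)).prod (volume.restrict (Set.Icc (0:ℝ) 1))) := by
    rw [Measure.prod_restrict, ← Measure.volume_eq_prod]
    exact hcont.continuousOn.integrableOn_compact (isCompact_Icc.prod isCompact_Icc)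
  rw [MeasureTheory.integral_prod _ hint]
  have inner : ∀ x ∈ Set.Icc (0:ℝ) 1,
      (∫ y, Xlen x y ∂(volume.restrict (Set.Icc (0:ℝ) 1))) = 1 - (x^2 - x + 1/2) := by
    intro x hx
    have hia : Integrable (fun y => |x - y|) (volume.restrict (Set.Icc (0:ℝ) 1)) :=
      (by fun_prop : Continuous fun y : ℝ => |x - y|).continuousOn.integrableOn_compact isCompact_Icc
    simp only [Xlen_abs]
    rw [integral_sub (integrable_const 1) hia, MeasureTheory.integral_const, inner_abs x hx]
    simp
  rw [MeasureTheory.setIntegral_congr_fun measurableSet_Icc inner]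
  rw [MeasureTheory.integral_Icc_eq_integral_Ioc, ← intervalIntegral.integral_of_le zero_le_one]
  have hpoly : IntervalIntegrable (fun x : ℝ => x^2 - x + 1/2) volume 0 1 :=
    (by fun_prop : Continuous fun x : ℝ => x^2 - x + 1/2).intervalIntegrable 0 1
  rw [intervalIntegral.integral_sub intervalIntegrable_const hpoly,
    intervalIntegral.integral_add ((by fun_prop : Continuous fun x : ℝ => x^2 - x).intervalIntegrable 0 1) intervalIntegrable_const,
    intervalIntegral.integral_sub (intervalIntegrable_pow 2) intervalIntegrable_id,
    integral_pow, integral_id, intervalIntegral.integral_const, intervalIntegral.integral_const,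
    smul_eq_mul, smul_eq_mul]
  norm_num

/-- `L = |Λ_ρ|`:  `X` if both links are crosses (`V = 0`), `X` if both are double bars
(`V = 1`), and `1` in the mixed case (`V = 2`). -/
noncomputable def Llen (v : ℕ) (u₁ u₂ : ℝ) : ℝ :=
  if v = 0 then Xlen u₁ u₂ else if v = 1 then Xlen u₁ u₂ else 1

/-- `M = |Λ_x|`:  `1 − X` if both links are crosses (`V = 0`), `X` if both are double
bars (`V = 1`), and `1` in the mixed case (`V = 2`). -/
noncomputable def Mlen (v : ℕ) (u₁ u₂ : ℝ) : ℝ :=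
  if v = 0 then 1 - Xlen u₁ u₂ else if v = 1 then Xlen u₁ u₂ else 1

/-- Let `u ∈ [0,1]`, let `U₁, U₂` be independent uniforms on `[0,1]`, let
`V` be independent of `(U₁,U₂)` with `P(V=0) = u²`, `P(V=1) = (1−u)²`,
`P(V=2) = 2u(1−u)`, and define `(L,M)` from `V` and `X = min{U₁,U₂} + 1 − max{U₁,U₂}`
as above.  Then `E[L + M] = 1 + 2u(1−u) + (1/3)(1−u)²`. -/
theorem expectation_L_plus_M
    {Ω : Type*} [MeasurableSpace Ω] (P : Measure Ω) [IsProbabilityMeasure P]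
    (u : ℝ) (hu : u ∈ Set.Icc (0 : ℝ) 1)
    (U₁ U₂ : Ω → ℝ) (V : Ω → ℕ)
    (h₁ : pdf.IsUniform U₁ (Set.Icc (0 : ℝ) 1) P volume)
    (h₂ : pdf.IsUniform U₂ (Set.Icc (0 : ℝ) 1) P volume)
    (hVmeas : Measurable V)
    (hindepU : IndepFun U₁ U₂ P)
    (hindepV : IndepFun (fun ω => (U₁ ω, U₂ ω)) V P)
    (hV0 : P {ω | V ω = 0} = ENNReal.ofReal (u ^ 2))
    (hV1 : P {ω | V ω = 1} = ENNReal.ofReal ((1 - u) ^ 2))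
    (hV2 : P {ω | V ω = 2} = ENNReal.ofReal (2 * u * (1 - u))) :
    ∫ ω, (Llen (V ω) (U₁ ω) (U₂ ω) + Mlen (V ω) (U₁ ω) (U₂ ω)) ∂P
      = 1 + 2 * u * (1 - u) + (1 / 3) * (1 - u) ^ 2 := by
  obtain ⟨hu0, hu1⟩ := hu
  have hI : volume (Set.Icc (0:ℝ) 1) = 1 := by simp
  have hIne0 : volume (Set.Icc (0:ℝ) 1) ≠ 0 := by rw [hI]; exact one_ne_zero
  have hInetop : volume (Set.Icc (0:ℝ) 1) ≠ ⊤ := by rw [hI]; exact ENNReal.one_ne_top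
  have hU₁ : AEMeasurable U₁ P := h₁.aemeasurable hIne0 hInetop
  have hU₂ : AEMeasurable U₂ P := h₂.aemeasurable hIne0 hInetop
  have hpair : AEMeasurable (fun ω => (U₁ ω, U₂ ω)) P := hU₁.prodMk hU₂
  have hmap₁ : Measure.map U₁ P = volume.restrict (Set.Icc (0:ℝ) 1) := by
    rw [h₁]; unfold ProbabilityTheory.cond; rw [hI]; simp
  have hmap₂ : Measure.map U₂ P = volume.restrict (Set.Icc (0:ℝ) 1) := by
    rw [h₂]; unfold ProbabilityTheory.cond; rw [hI]; simp
  have hmapPair : Measure.map (fun ω => (U₁ ω, U₂ ω)) P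
      = (volume.restrict (Set.Icc (0:ℝ) 1)).prod (volume.restrict (Set.Icc (0:ℝ) 1)) := by
    rw [(indepFun_iff_map_prod_eq_prod_map_map hU₁ hU₂).mp hindepU, hmap₁, hmap₂]
  have hXcont : Continuous fun p : ℝ × ℝ => Xlen p.1 p.2 := by unfold Xlen; fun_prop
  have hXae : AEStronglyMeasurable (fun ω => Xlen (U₁ ω) (U₂ ω)) P :=
    (hXcont.measurable.comp_aemeasurable hpair).aestronglyMeasurable
  -- a.e. membership
  have haemem : ∀ (W : Ω → ℝ), pdf.IsUniform W (Set.Icc (0:ℝ) 1) P volume →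
      ∀ᵐ ω ∂P, W ω ∈ Set.Icc (0:ℝ) 1 := by
    intro W hW
    have h0 : P (W ⁻¹' (Set.Icc (0:ℝ) 1)ᶜ) = 0 := by
      rw [hW.measure_preimage hIne0 hInetop measurableSet_Icc.compl]
      simp
    rw [ae_iff]
    exact h0
  have haemem₁ := haemem U₁ h₁
  have haemem₂ := haemem U₂ h₂
  have hXb : ∀ᵐ ω ∂P, |Xlen (U₁ ω) (U₂ ω)| ≤ 1 := by
    filter_upwards [haemem₁, haemem₂] with ω hh1 hh2
    have h3 : min (U₁ ω) (U₂ ω) ≤ max (U₁ ω) (U₂ ω) := min_le_max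
    have h4 : (0:ℝ) ≤ min (U₁ ω) (U₂ ω) := le_min hh1.1 hh2.1
    have h5 : max (U₁ ω) (U₂ ω) ≤ 1 := max_le hh1.2 hh2.2
    rw [abs_le]; unfold Xlen
    constructor <;> linarith
  -- the three pieces
  set A : Ω → ℝ := fun ω => if V ω = 0 then (1:ℝ) else 0 with hA
  set B : Ω → ℝ := fun ω => (if V ω = 1 then (1:ℝ) else 0) * (2 * Xlen (U₁ ω) (U₂ ω)) with hB
  set C : Ω → ℝ := fun ω => if V ω = 0 ∨ V ω = 1 then (0:ℝ) else 2 with hC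
  have hdecomp : ∀ ω, Llen (V ω) (U₁ ω) (U₂ ω) + Mlen (V ω) (U₁ ω) (U₂ ω)
      = A ω + B ω + C ω := by
    intro ω; unfold Llen Mlen
    by_cases h0 : V ω = 0 <;> by_cases h1 : V ω = 1 <;>
      simp [hA, hB, hC, h0, h1] <;> ring
  -- measurability
  have hφ1 : Measurable fun n : ℕ => if n = 1 then (1:ℝ) else 0 := measurable_of_countable _
  have hmA : AEStronglyMeasurable A P :=
    ((measurable_of_countable (fun n : ℕ => if n = 0 then (1:ℝ) else 0)).comp hVmeas).aestronglyMeasurable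
  have hmB : AEStronglyMeasurable B P :=
    ((hφ1.comp hVmeas).aestronglyMeasurable).mul (hXae.const_mul 2)
  have hmC : AEStronglyMeasurable C P :=
    ((measurable_of_countable (fun n : ℕ => if n = 0 ∨ n = 1 then (0:ℝ) else 2)).comp hVmeas).aestronglyMeasurable
  -- integrability
  have hIA : Integrable A P := by
    refine Integrable.mono' (integrable_const 1) hmA (ae_of_all _ fun ω => ?_)
    by_cases h0 : V ω = 0 <;> simp [hA, h0]
  have hIB : Integrable B P := by
    refine Integrable.mono' (integrable_const 2) hmB ?_
    filter_upwards [hXb] with ω hω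
    simp only [hB, Real.norm_eq_abs, abs_mul, abs_two]
    have h1 : |(if V ω = 1 then (1:ℝ) else 0)| ≤ 1 := by split <;> simp
    have h2 : (0:ℝ) ≤ |Xlen (U₁ ω) (U₂ ω)| := abs_nonneg _
    have h3 : (0:ℝ) ≤ |(if V ω = 1 then (1:ℝ) else 0)| := abs_nonneg _
    nlinarith
  have hIC : Integrable C P := by
    refine Integrable.mono' (integrable_const 2) hmC (ae_of_all _ fun ω => ?_)
    by_cases h01 : V ω = 0 ∨ V ω = 1 <;> simp [hC, h01]
  -- integral of A
  have hsA : MeasurableSet {ω | V ω = 0} := hVmeas (measurableSet_singleton 0)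
  have hsB : MeasurableSet {ω | V ω = 1} := hVmeas (measurableSet_singleton 1)
  have hintA : ∫ ω, A ω ∂P = u ^ 2 := by
    have : A = Set.indicator {ω | V ω = 0} (fun _ => (1:ℝ)) := by
      funext ω; by_cases h0 : V ω = 0 <;> simp [hA, h0, Set.indicator_apply]
    rw [this, MeasureTheory.integral_indicator_const _ hsA, measureReal_def, hV0, smul_eq_mul, mul_one,
      ENNReal.toReal_ofReal (sq_nonneg _)]
  -- integral of C
  have hVC : P {ω | ¬(V ω = 0 ∨ V ω = 1)} = ENNReal.ofReal (2 * u * (1 - u)) := by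
    have hsets : {ω | ¬(V ω = 0 ∨ V ω = 1)} = ({ω | V ω = 0} ∪ {ω | V ω = 1})ᶜ := by
      ext ω; simp [not_or]
    have hdisj : Disjoint {ω | V ω = 0} {ω | V ω = 1} := by
      rw [Set.disjoint_left]; rintro ω h0 h1
      simp only [Set.mem_setOf_eq] at h0 h1
      omega
    rw [hsets, measure_compl (hsA.union hsB) (measure_ne_top P _),
      measure_union hdisj hsB, hV0, hV1, measure_univ,
      ← ENNReal.ofReal_add (sq_nonneg _) (sq_nonneg _)]
    have h2 : ENNReal.ofReal (2 * u * (1 - u)) = ENNReal.ofReal (1 - (u ^ 2 + (1 - u) ^ 2)) := by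
      congr 1; ring
    rw [h2, ← ENNReal.ofReal_one, ← ENNReal.ofReal_sub _ (by positivity)]
  have hintC : ∫ ω, C ω ∂P = 2 * (2 * u * (1 - u)) := by
    have : C = Set.indicator {ω | ¬(V ω = 0 ∨ V ω = 1)} (fun _ => (2:ℝ)) := by
      funext ω
      by_cases h01 : V ω = 0 ∨ V ω = 1
      · have hne : ¬(¬V ω = 0 ∧ ¬V ω = 1) := by tauto
        simp [hC, h01, Set.indicator_apply, hne]
      · have hy : ¬V ω = 0 ∧ ¬V ω = 1 := by tauto
        simp [hC, h01, Set.indicator_apply, hy]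
    have hms : MeasurableSet {ω | ¬(V ω = 0 ∨ V ω = 1)} := by
      have : {ω | ¬(V ω = 0 ∨ V ω = 1)} = ({ω | V ω = 0} ∪ {ω | V ω = 1})ᶜ := by
        ext ω; simp [not_or]
      rw [this]; exact (hsA.union hsB).compl
    rw [this, MeasureTheory.integral_indicator_const _ hms, measureReal_def, hVC, smul_eq_mul,
      ENNReal.toReal_ofReal (by nlinarith), mul_comm]
  -- integral of B
  have hψm : Measurable fun p : ℝ × ℝ => 2 * Xlen p.1 p.2 :=
    (continuous_const.mul hXcont).measurable
  have hindB : IndepFun (fun ω => (fun n : ℕ => if n = 1 then (1:ℝ) else 0) (V ω))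
      (fun ω => (fun p : ℝ × ℝ => 2 * Xlen p.1 p.2) (U₁ ω, U₂ ω)) P :=
    hindepV.symm.comp hφ1 hψm
  have hintXP : ∫ ω, 2 * Xlen (U₁ ω) (U₂ ω) ∂P = 4/3 := by
    have hfm : AEStronglyMeasurable (fun p : ℝ × ℝ => 2 * Xlen p.1 p.2)
        (Measure.map (fun ω => (U₁ ω, U₂ ω)) P) :=
      (continuous_const.mul hXcont).aestronglyMeasurable
    have h := MeasureTheory.integral_map hpair hfm
    simp only at h
    rw [← h, hmapPair, MeasureTheory.integral_const_mul, integral_Xlen_prod]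
    norm_num
  have hind1 : ∫ ω, (if V ω = 1 then (1:ℝ) else 0) ∂P = (1 - u) ^ 2 := by
    have : (fun ω => if V ω = 1 then (1:ℝ) else 0)
        = Set.indicator {ω | V ω = 1} (fun _ => (1:ℝ)) := by
      funext ω; by_cases h1 : V ω = 1 <;> simp [h1, Set.indicator_apply]
    rw [this, MeasureTheory.integral_indicator_const _ hsB, measureReal_def, hV1, smul_eq_mul, mul_one,
      ENNReal.toReal_ofReal (sq_nonneg _)]
  have hintB : ∫ ω, B ω ∂P = (1 - u) ^ 2 * (4/3) := by
    rw [hB]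
    rw [hindB.integral_fun_mul_eq_mul_integral ((hφ1.comp hVmeas).aestronglyMeasurable)
      (hψm.comp_aemeasurable hpair).aestronglyMeasurable]
    rw [hind1, hintXP]
  -- assemble
  calc ∫ ω, (Llen (V ω) (U₁ ω) (U₂ ω) + Mlen (V ω) (U₁ ω) (U₂ ω)) ∂P
      = ∫ ω, (A ω + B ω + C ω) ∂P := integral_congr_ae (ae_of_all _ hdecomp)
    _ = (∫ ω, A ω ∂P) + (∫ ω, B ω ∂P) + (∫ ω, C ω ∂P) := by
        have hIAB : Integrable (fun ω => A ω + B ω) P := hIA.add hIB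
        rw [integral_add hIAB hIC, integral_add hIA hIB]
    _ = u ^ 2 + (1 - u) ^ 2 * (4/3) + 2 * (2 * u * (1 - u)) := by
        rw [hintA, hintB, hintC]
    _ = 1 + 2 * u * (1 - u) + (1 / 3) * (1 - u) ^ 2 := by ring
end

section
/- For every A > 0 there exist constants C > 0 and d₀ ∈ ℕ such that for all integers d ≥ d₀, all α ∈ [0, A], and all s ∈ [0, 1/d], setting β = 1/d + α/d², one has (e^{−β}(1+β))^d − (e^{−β}(1 + β − s·β))^d ≥ s − (s/d)·(3/2 − α) − s²/2 − C/d³. -/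
open Finset

lemma log_lb (x : ℝ) (h0 : 0 ≤ x) (h1 : x ≤ 1/2) :
    x - x^2/2 - 2*x^3 ≤ Real.log (1+x) := by
  have habs : |(-x)| < 1 := by rw [abs_neg, abs_of_nonneg h0]; linarith
  have h := Real.abs_log_sub_add_sum_range_le habs 2
  rw [abs_neg, abs_of_nonneg h0] at h
  have hsum : (∑ i ∈ range 2, (-x) ^ (i + 1) / (i + 1)) = -x + x^2/2 := by
    simp [Finset.sum_range_succ]; ring
  rw [hsum, sub_neg_eq_add] at h
  have h2 : |(-x + x^2/2) + Real.log (1+x)| ≤ x^3/(1-x) := h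
  have h3 : x^3/(1-x) ≤ 2*x^3 := by
    rw [div_le_iff₀ (by linarith)]
    nlinarith [pow_nonneg h0 3]
  have := abs_le.mp h2
  linarith [this.1]

lemma sum_ge_sqrt (a b : ℝ) (hb : 1 ≤ b) (hba : b ≤ a) (d : ℕ) :
    (d:ℝ) * Real.sqrt ((a*b)^(d-1)) ≤ ∑ k ∈ range d, a^k * b^(d-1-k) := by
  have h0b : (0:ℝ) ≤ b := by linarith
  have h0a : (0:ℝ) ≤ a := by linarith
  have key : ∀ k ∈ range d,
      2 * Real.sqrt ((a*b)^(d-1)) ≤ a^k * b^(d-1-k) + a^(d-1-k) * b^k := by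
    intro k hk
    have hk' : k < d := Finset.mem_range.mp hk
    set x := a^k * b^(d-1-k) with hxdef
    set y := a^(d-1-k) * b^k with hydef
    have hx : 0 ≤ x := by positivity
    have hy : 0 ≤ y := by positivity
    have hprod : x * y = (a*b)^(d-1) := by
      have : x * y = (a^k * a^(d-1-k)) * (b^(d-1-k) * b^k) := by ring
      rw [this, ← pow_add, ← pow_add, mul_pow]
      congr 2 <;> omega
    have hsq : Real.sqrt ((a*b)^(d-1)) = Real.sqrt x * Real.sqrt y := by
      rw [← hprod, Real.sqrt_mul hx]
    rw [hsq]
    nlinarith [Real.sq_sqrt hx, Real.sq_sqrt hy, sq_nonneg (Real.sqrt x - Real.sqrt y)]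
  have hrefl : ∑ k ∈ range d, a^(d-1-k) * b^k = ∑ k ∈ range d, a^k * b^(d-1-k) := by
    rw [← Finset.sum_range_reflect (fun k => a^k * b^(d-1-k)) d]
    apply Finset.sum_congr rfl
    intro k hk
    have hk' : k < d := Finset.mem_range.mp hk
    congr 2
    omega
  have hsum := Finset.sum_le_sum key
  rw [Finset.sum_const, Finset.card_range, Finset.sum_add_distrib, hrefl] at hsum
  rw [nsmul_eq_mul] at hsum
  linarith

set_option maxHeartbeats 1000000 in
/-- For every `A > 0` there exist `C > 0` and `d₀ ∈ ℕ` such that for all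
integers `d ≥ d₀`, all `α ∈ [0, A]`, and all `s ∈ [0, 1/d]`, setting `β = 1/d + α/d²`,
one has `(e^{−β}(1+β))^d − (e^{−β}(1 + β − s·β))^d ≥ s − (s/d)·(3/2 − α) − s²/2 − C/d³`. -/
theorem A1_difference_lower_bound (A : ℝ) (hA : 0 < A) :
    ∃ C : ℝ, 0 < C ∧ ∃ d₀ : ℕ, ∀ d : ℕ, d₀ ≤ d → ∀ α ∈ Set.Icc (0 : ℝ) A,
      ∀ s ∈ Set.Icc (0 : ℝ) (1 / (d : ℝ)),
        ∀ β : ℝ, β = 1 / (d : ℝ) + α / (d : ℝ) ^ 2 →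
          s - (s / (d : ℝ)) * (3 / 2 - α) - s ^ 2 / 2 - C / (d : ℝ) ^ 3
            ≤ (Real.exp (-β) * (1 + β)) ^ d - (Real.exp (-β) * (1 + β - s * β)) ^ d := by
  refine ⟨2*A^2 + 5*A/2 + 7, by positivity, 2*⌈A⌉₊ + 4, ?_⟩
  intro d hd α hα s hs β hβ
  obtain ⟨hα0, hαA⟩ := hα
  obtain ⟨hs0, hs1⟩ := hs
  set C : ℝ := 2*A^2 + 5*A/2 + 7 with hC
  set D : ℝ := (d:ℝ) with hD
  clear_value C D
  have hceil : A ≤ (⌈A⌉₊ : ℝ) := Nat.le_ceil A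
  have hcast : ((2*⌈A⌉₊ + 4 : ℕ) : ℝ) ≤ D := by rw [hD]; exact_mod_cast hd
  have hAD : 2*A + 4 ≤ D := by push_cast at hcast; linarith only [hcast, hceil]
  have hD4 : (4:ℝ) ≤ D := by linarith only [hAD, hA]
  have hD0 : (0:ℝ) < D := by linarith only [hD4]
  set u : ℝ := 1/D with hu
  clear_value u
  have hu0 : 0 < u := by rw [hu]; exact one_div_pos.mpr hD0
  have huD : u * D = 1 := by rw [hu, one_div, inv_mul_cancel₀ hD0.ne']
  have hu4 : u ≤ 1/4 := by
    linarith only [mul_le_mul_of_nonneg_left hD4 hu0.le, huD]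
  have hαu : α * u ≤ 1/2 := by
    have h2α : 2*α ≤ D := by linarith only [hAD, hαA, hA]
    have := mul_le_mul_of_nonneg_left h2α hu0.le
    nlinarith only [this, huD]
  have hαu0 : 0 ≤ α * u := mul_nonneg hα0 hu0.le
  have hsu : s ≤ u := hs1
  have hβu : β = u + α * u^2 := by rw [hβ, hu]; ring
  have hDβeq : D * β = 1 + α * u := by
    rw [hβu]; linear_combination (1 + α*u) * huD
  have hβ0 : 0 ≤ β := by
    rw [hβu]; linarith only [hu0, mul_nonneg hα0 (sq_nonneg u)]
  have hβhalf : β ≤ 1/2 := by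
    rw [hβu]
    nlinarith only [mul_le_mul_of_nonneg_left hαu hu0.le, hu4, hu0.le]
  have hs1' : s ≤ 1 := by linarith only [hsu, hu4]
  have hγ0 : 0 ≤ β - s*β := by
    nlinarith only [mul_nonneg hβ0 (show (0:ℝ) ≤ 1 - s by linarith only [hs1'])]
  have hγβ : β - s*β ≤ β := by
    nlinarith only [mul_nonneg hs0 hβ0]
  set a : ℝ := 1 + β with ha
  set b : ℝ := 1 + β - s*β with hb
  clear_value a b
  have hb1 : (1:ℝ) ≤ b := by rw [hb]; linarith only [hγ0]
  have hba : b ≤ a := by rw [ha, hb]; nlinarith only [mul_nonneg hs0 hβ0]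
  have ha0 : (0:ℝ) < a := by linarith only [hb1, hba]
  have hb0 : (0:ℝ) < b := by linarith only [hb1]
  -- rewrite the RHS of the goal
  have hexp : Real.exp (-β) ^ d = Real.exp (-(D*β)) := by
    rw [← Real.exp_nat_mul, ← hD]; congr 1; ring
  have hgoal_eq : (Real.exp (-β) * a) ^ d - (Real.exp (-β) * b) ^ d
      = Real.exp (-(D*β)) * (a^d - b^d) := by
    rw [mul_pow, mul_pow, hexp]; ring
  have hdiff : a^d - b^d = (∑ k ∈ range d, a^k * b^(d-1-k)) * (s*β) := by
    have h := geom_sum₂_mul a b d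
    rw [show a - b = s*β by rw [ha, hb]; ring] at h
    exact h.symm
  set Q : ℝ := Real.sqrt ((a*b)^(d-1)) with hQdef
  clear_value Q
  have habpos : 0 < (a*b)^(d-1) := pow_pos (mul_pos ha0 hb0) _
  have hQpos : 0 < Q := by rw [hQdef]; exact Real.sqrt_pos.mpr habpos
  have hsum : D * Q ≤ ∑ k ∈ range d, a^k * b^(d-1-k) := by
    rw [hD, hQdef]; exact sum_ge_sqrt a b hb1 hba d
  have hd1 : 1 ≤ d := by omega
  have hm : ((d-1 : ℕ) : ℝ) = D - 1 := by
    rw [hD, Nat.cast_sub hd1, Nat.cast_one]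
  set E : ℝ := Real.log (D*β) - D*β + (D-1) * (Real.log a + Real.log b) / 2 with hE
  clear_value E
  have hDβpos : 0 < D*β := by rw [hDβeq]; linarith only [hαu0]
  have hQexp : Q = Real.exp ((D-1) * (Real.log a + Real.log b) / 2) := by
    rw [← Real.exp_log hQpos]
    rw [hQdef, Real.log_sqrt habpos.le, Real.log_pow, hm,
      Real.log_mul ha0.ne' hb0.ne']
  have hX : Real.exp (-(D*β)) * (D * Q) * (s*β) = s * Real.exp E := by
    rw [hE, show Real.log (D*β) - D*β + (D-1) * (Real.log a + Real.log b) / 2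
        = Real.log (D*β) + (-(D*β)) + (D-1) * (Real.log a + Real.log b) / 2 by ring,
      Real.exp_add, Real.exp_add, Real.exp_log hDβpos, ← hQexp]
    ring
  -- log lower bounds
  have hlog1 : α*u - (α*u)^2/2 - 2*(α*u)^3 ≤ Real.log (1 + α*u) := log_lb _ hαu0 hαu
  have hloga : β - β^2/2 - 2*β^3 ≤ Real.log a := by
    rw [ha]; exact log_lb β hβ0 hβhalf
  have hlogb : (β - s*β) - (β - s*β)^2/2 - 2*(β - s*β)^3 ≤ Real.log b := by
    have h := log_lb (β - s*β) hγ0 (le_trans hγβ hβhalf)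
    rw [show (1:ℝ) + (β - s*β) = b by rw [hb]; ring] at h
    exact h
  have hL : (β - β^2/2 - 2*β^3) + ((β - s*β) - (β - s*β)^2/2 - 2*(β - s*β)^3)
      ≤ Real.log a + Real.log b := by linarith only [hloga, hlogb]
  have hD1 : (0:ℝ) ≤ (D-1)/2 := by linarith only [hD4]
  have hmulL := mul_le_mul_of_nonneg_left hL hD1
  -- (i)
  have h_i : 1 + α*u - s/2 - (α*u)*s/2 - β ≤ (D-1)*(β + (β - s*β))/2 := by
    have hid : (D-1)*(β + (β - s*β))/2 = (1 + α*u)*(2-s)/2 - β*(2-s)/2 := by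
      linear_combination ((2-s)/2) * hDβeq
    nlinarith only [hid, mul_nonneg hβ0 hs0]
  -- (ii)
  have hDβ2 : D*β^2 = (1+α*u)^2 * u := by
    have h1 : (1+α*u)^2 * u = (D*β)^2 * u := by rw [hDβeq]
    rw [h1]; linear_combination (-(D*β^2)) * huD
  have hγ2 : (β - s*β)^2 ≤ β^2 := by
    nlinarith only [mul_le_mul hγβ hγβ hγ0 hβ0]
  have h_ii : (D-1)*(β^2 + (β - s*β)^2)/4 ≤ (1+α*u)^2 * u / 2 := by
    rw [← hDβ2]
    linarith only [mul_le_mul_of_nonneg_left hγ2 hD0.le, sq_nonneg β, sq_nonneg (β - s*β)]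
  -- (iii)
  have hDβ3 : D*β^3 = (1+α*u)^3 * u^2 := by
    have h1 : (1+α*u)^3 * u^2 = (D*β)^3 * u^2 := by rw [hDβeq]
    rw [h1]; linear_combination (-(D*β^3) * (u*D + 1)) * huD
  have hγ3 : (β - s*β)^3 ≤ β^3 := pow_le_pow_left₀ hγ0 hγβ 3
  have hcube : (1+α*u)^3 ≤ 27/8 := by
    nlinarith only [hαu, hαu0, mul_le_mul hαu hαu hαu0 (by norm_num : (0:ℝ) ≤ 1/2),
      mul_le_mul_of_nonneg_left hαu (mul_nonneg hαu0 hαu0)]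
  have h_iii : (D-1)*(β^3 + (β - s*β)^3) ≤ 7*u^2 := by
    have h1 : (D-1)*(β^3 + (β - s*β)^3) ≤ 2*(D*β^3) := by
      linarith only [mul_le_mul_of_nonneg_left hγ3 hD0.le, pow_nonneg hβ0 3, pow_nonneg hγ0 3]
    rw [hDβ3] at h1
    nlinarith only [h1, mul_le_mul_of_nonneg_right hcube (sq_nonneg u), sq_nonneg u]
  -- combine to get E lower bound
  have hαuA : α*u ≤ A*u := mul_le_mul_of_nonneg_right hαA hu0.le
  have hα2u2 : α^2*u^2 ≤ A^2*u^2 := by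
    nlinarith only [mul_le_mul hαuA hαuA hαu0 (mul_nonneg hA.le hu0.le)]
  have h2α3u3 : 2*(α^3*u^3) ≤ A^2*u^2 := by
    nlinarith only [mul_le_mul_of_nonneg_left hαu (mul_nonneg hαu0 hαu0), hα2u2]
  have hαs : α*s ≤ A*u := mul_le_mul hαA hsu hs0 hA.le
  have hαus : α*u*s ≤ A*u^2 := by
    nlinarith only [mul_le_mul_of_nonneg_left hαs hu0.le]
  have hαu2 : α*u^2 ≤ A*u^2 := by
    nlinarith only [mul_le_mul_of_nonneg_right hαA (sq_nonneg u)]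
  have hα2u3 : α^2*u^3 ≤ A^2*u^2 := by
    have hu1 : u ≤ 1 := by linarith only [hu4]
    nlinarith only [mul_le_mul_of_nonneg_right hα2u2 hu0.le,
      mul_le_mul_of_nonneg_left hu1 (mul_nonneg (mul_nonneg hA.le hA.le) (sq_nonneg u))]
  have hElow : -s/2 - (3/2 - α)*u - C*u^2 ≤ E := by
    have hexpand : (D-1) * ((β - β^2/2 - 2*β^3) + ((β - s*β) - (β - s*β)^2/2 - 2*(β - s*β)^3)) / 2
        = (D-1)*(β + (β - s*β))/2 - (D-1)*(β^2 + (β - s*β)^2)/4 - (D-1)*(β^3 + (β - s*β)^3) := by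
      ring
    have hlogDβ : Real.log (D*β) = Real.log (1 + α*u) := by rw [hDβeq]
    have hE2 : Real.log (1 + α*u) - (1 + α*u)
        + ((D-1)*(β + (β - s*β))/2 - (D-1)*(β^2 + (β - s*β)^2)/4 - (D-1)*(β^3 + (β - s*β)^3)) ≤ E := by
      have hmulL' : (D-1)*(β + (β - s*β))/2 - (D-1)*(β^2 + (β - s*β)^2)/4
          - (D-1)*(β^3 + (β - s*β)^3) ≤ (D-1) * (Real.log a + Real.log b) / 2 := by
        linarith only [hmulL]
      rw [hE, hlogDβ, hDβeq]
      linarith only [hmulL']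
    have hfinal : -s/2 - (3/2 - α)*u - C*u^2 ≤
        (α*u - (α*u)^2/2 - 2*(α*u)^3) - (1 + α*u)
        + ((1 + α*u - s/2 - (α*u)*s/2 - β) - (1+α*u)^2*u/2 - 7*u^2) := by
      rw [hβu, hC]
      nlinarith only [hα2u2, h2α3u3, hαus, hαu2, hα2u3]
    calc -s/2 - (3/2 - α)*u - C*u^2
        ≤ (α*u - (α*u)^2/2 - 2*(α*u)^3) - (1 + α*u)
          + ((1 + α*u - s/2 - (α*u)*s/2 - β) - (1+α*u)^2*u/2 - 7*u^2) := hfinal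
      _ ≤ Real.log (1 + α*u) - (1 + α*u)
          + ((D-1)*(β + (β - s*β))/2 - (D-1)*(β^2 + (β - s*β)^2)/4 - (D-1)*(β^3 + (β - s*β)^3)) := by
          linarith only [hlog1, h_i, h_ii, h_iii]
      _ ≤ E := hE2
  -- assemble
  have hEexp : E + 1 ≤ Real.exp E := Real.add_one_le_exp E
  have hchain1 : s * (1 + (-s/2 - (3/2 - α)*u - C*u^2)) ≤ s * Real.exp E := by
    have h : 1 + (-s/2 - (3/2 - α)*u - C*u^2) ≤ Real.exp E := by
      linarith only [hElow, hEexp]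
    exact mul_le_mul_of_nonneg_left h hs0
  have hsβ0 : 0 ≤ s * β := mul_nonneg hs0 hβ0
  have hchain2 : s * Real.exp E ≤ Real.exp (-(D*β)) * (a^d - b^d) := by
    rw [hdiff, ← hX]
    have h := mul_le_mul_of_nonneg_right
      (mul_le_mul_of_nonneg_left hsum (Real.exp_pos (-(D*β))).le) hsβ0
    nlinarith only [h]
  have hCpos : (0:ℝ) < C := by rw [hC]; positivity
  have htarget : s - (s / D) * (3 / 2 - α) - s ^ 2 / 2 - C / D ^ 3
      ≤ s * (1 + (-s/2 - (3/2 - α)*u - C*u^2)) := by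
    have h1 : s / D = s * u := by rw [hu]; ring
    have h2 : C / D^3 = C * u^3 := by
      rw [hu]; field_simp
    rw [h1, h2]
    have h3 : s * (C * u^2) ≤ C * u^3 := by
      nlinarith only [mul_le_mul_of_nonneg_right hsu (mul_nonneg hCpos.le (sq_nonneg u))]
    nlinarith only [h3]
  rw [hgoal_eq]
  calc s - (s / D) * (3 / 2 - α) - s ^ 2 / 2 - C / D ^ 3
      ≤ s * (1 + (-s/2 - (3/2 - α)*u - C*u^2)) := htarget
    _ ≤ s * Real.exp E := hchain1
    _ ≤ Real.exp (-(D*β)) * (a^d - b^d) := hchain2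
end
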